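/- arXiv:1705.00266 — 5 statements merged into one kernel-verified Lean document; each statement's English description precedes it below -/
import Mathlib

section
/- For Puiseux series x, y over a commutative ring L, ELTrop(x) + ELTrop(y) ⊨ ELTrop(x+y) and ELTrop(x)·ELTrop(y) ⊨ ELTrop(xy). If moreover L is an integral domain, then ELTrop(xy) = ELTrop(x)·ELTrop(y). -/
/-- ELT addition on pairs (tangible value, layer). -/
def eltAdd {F L : Type*} [LinearOrder F] [Add L] (x y : F × L) : F × L :=
  if y.1 < x.1 then x else if x.1 < y.1 then y else (x.1, x.2 + y.2)

/-- ELT multiplication on pairs (tangible value, layer). -/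
def eltMul {F L : Type*} [Add F] [Mul L] (x y : F × L) : F × L :=
  (x.1 + y.1, x.2 * y.2)

/-- Addition on R̄ = R ∪ {−∞}, with −∞ (i.e. `none`) the additive identity. -/
def eAdd {F L : Type*} [LinearOrder F] [Add L] :
    Option (F × L) → Option (F × L) → Option (F × L)
  | none, y => y
  | some a, none => some a
  | some a, some b => some (eltAdd a b)

/-- Multiplication on R̄ = R ∪ {−∞}, with −∞ absorbing. -/
def eMul {F L : Type*} [Add F] [Mul L] :
    Option (F × L) → Option (F × L) → Option (F × L)
  | some a, some b => some (eltMul a b)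
  | _, _ => none

/-- The layer (sorting map) on R̄; the layer of −∞ is 0. -/
def sBar {F L : Type*} [Zero L] (x : Option (F × L)) : L :=
  (x.map Prod.snd).getD 0

/-- The surpassing relation on R̄ : x ⊨ y iff x = y + z with z of layer zero. -/
def eSurp {F L : Type*} [LinearOrder F] [Add L] [Zero L]
    (x y : Option (F × L)) : Prop :=
  ∃ z : Option (F × L), sBar z = 0 ∧ x = eAdd y z

open Classical in
/-- EL tropicalization of a Puiseux (Hahn) series: a nonzero series with leading
monomial ℓ t^a goes to (−a, ℓ); the zero series goes to −∞. -/
noncomputable def ELTrop {F L : Type*} [AddCommGroup F] [LinearOrder F] [IsOrderedAddMonoid F] [CommRing L]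
    (x : HahnSeries F L) : Option (F × L) :=
  if x = 0 then none else some (-x.order, x.coeff x.order)


lemma ELTrop_of_ne {F L : Type*} [AddCommGroup F] [LinearOrder F] [IsOrderedAddMonoid F] [CommRing L]
    {x : HahnSeries F L} (hx : x ≠ 0) :
    ELTrop x = some (-x.order, x.coeff x.order) := if_neg hx

lemma leadingCoeff_eq_coeff_order {F L : Type*} [AddCommGroup F] [LinearOrder F] [IsOrderedAddMonoid F] [CommRing L]
    {x : HahnSeries F L} (hx : x ≠ 0) : x.leadingCoeff = x.coeff x.order := by
  exact HahnSeries.leadingCoeff_eq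

lemma order_add_order_le_order_mul {F L : Type*} [AddCommGroup F] [LinearOrder F] [IsOrderedAddMonoid F] [CommRing L]
    {x y : HahnSeries F L} (hx : x ≠ 0) (hy : y ≠ 0) (hxy : x * y ≠ 0) :
    x.order + y.order ≤ (x * y).order := by
  rw [HahnSeries.order_of_ne hx, HahnSeries.order_of_ne hy, HahnSeries.order_of_ne hxy,
    ← Set.IsWF.min_add]
  exact Set.IsWF.min_le_min_of_subset HahnSeries.support_mul_subset

lemma eltAdd_left {F L : Type*} [LinearOrder F] [Add L] {u v : F × L}
    (h : v.1 < u.1) : eltAdd u v = u := if_pos h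

lemma eltAdd_right {F L : Type*} [LinearOrder F] [Add L] {u v : F × L}
    (h : u.1 < v.1) : eltAdd u v = v := by
  rw [eltAdd, if_neg (asymm h), if_pos h]

lemma eltAdd_mid {F L : Type*} [LinearOrder F] [Add L] {u v : F × L}
    (h : u.1 = v.1) : eltAdd u v = (u.1, u.2 + v.2) := by
  rw [eltAdd, if_neg (by rw [h]; exact lt_irrefl _), if_neg (by rw [h]; exact lt_irrefl _)]

lemma eSurp_refl {F L : Type*} [LinearOrder F] [AddZeroClass L]
    (u : Option (F × L)) : eSurp u u := by
  refine ⟨none, rfl, ?_⟩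
  cases u <;> rfl

theorem ELTrop_props {F L : Type*} [AddCommGroup F] [LinearOrder F] [IsOrderedAddMonoid F] [CommRing L]
    (x y : HahnSeries F L) :
    eSurp (eAdd (ELTrop x) (ELTrop y)) (ELTrop (x + y)) ∧
    eSurp (eMul (ELTrop x) (ELTrop y)) (ELTrop (x * y)) ∧
    (IsDomain L → ELTrop (x * y) = eMul (ELTrop x) (ELTrop y)) := by
  by_cases hx : x = 0
  · subst hx
    have h1 : ELTrop (0 : HahnSeries F L) = none := if_pos rfl
    have h0 : (0 : HahnSeries F L) * y = 0 := zero_mul y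
    rw [h1, zero_add, h0, h1]
    refine ⟨?_, ⟨none, rfl, by cases ELTrop y <;> rfl⟩, fun _ => by cases ELTrop y <;> rfl⟩
    cases hT : ELTrop y <;> exact eSurp_refl _
  by_cases hy : y = 0
  · subst hy
    have h1 : ELTrop (0 : HahnSeries F L) = none := if_pos rfl
    have h0 : x * (0 : HahnSeries F L) = 0 := mul_zero x
    rw [h1, add_zero, h0, h1]
    refine ⟨?_, ⟨none, rfl, by cases ELTrop x <;> rfl⟩, fun _ => by cases ELTrop x <;> rfl⟩
    cases hT : ELTrop x <;> exact eSurp_refl _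
  -- main case: x ≠ 0, y ≠ 0
  have hEx : ELTrop x = some (-x.order, x.coeff x.order) := ELTrop_of_ne hx
  have hEy : ELTrop y = some (-y.order, y.coeff y.order) := ELTrop_of_ne hy
  have hcxne : x.coeff x.order ≠ 0 := (mt HahnSeries.coeff_order_eq_zero.mp hx)
  have hcyne : y.coeff y.order ≠ 0 := (mt HahnSeries.coeff_order_eq_zero.mp hy)
  have hmulcoeff : (x * y).coeff (x.order + y.order) = x.coeff x.order * y.coeff y.order := by
    rw [HahnSeries.coeff_mul_order_add_order x y,
      leadingCoeff_eq_coeff_order hx, leadingCoeff_eq_coeff_order hy]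
  constructor
  · -- addition
    rw [hEx, hEy]
    rcases lt_trichotomy x.order y.order with hab | hab | hab
    · -- x dominates
      have hy0 : y.coeff x.order = 0 := HahnSeries.coeff_eq_zero_of_lt_order hab
      have hco : (x + y).coeff x.order = x.coeff x.order := by
        rw [HahnSeries.coeff_add, hy0, add_zero]
      have hne : x + y ≠ 0 := HahnSeries.ne_zero_of_coeff_ne_zero (hco ▸ hcxne)
      have hord : (x + y).order = x.order := by
        refine le_antisymm (HahnSeries.order_le_of_coeff_ne_zero (hco ▸ hcxne)) ?_
        have := HahnSeries.min_order_le_order_add hne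
        rwa [min_eq_left hab.le] at this
      rw [ELTrop_of_ne hne, hord, hco]
      refine ⟨none, rfl, ?_⟩
      show some (eltAdd _ _) = _
      rw [eltAdd_left (neg_lt_neg hab)]
      rfl
    · -- equal orders
      have heq : eltAdd (-x.order, x.coeff x.order) (-y.order, y.coeff y.order)
          = (-x.order, x.coeff x.order + y.coeff y.order) :=
        eltAdd_mid (by rw [hab])
      have hco : (x + y).coeff x.order = x.coeff x.order + y.coeff y.order := by
        rw [HahnSeries.coeff_add, hab]
      by_cases hsum : x + y = 0
      · have hz : x.coeff x.order + y.coeff y.order = 0 := by rw [← hco, hsum]; simp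
        refine ⟨some (-x.order, x.coeff x.order + y.coeff y.order), by simp [sBar, hz], ?_⟩
        have hE0 : ELTrop (x + y) = none := if_pos hsum
        rw [hE0]
        show some (eltAdd _ _) = _
        rw [heq]
        rfl
      · have hord : x.order ≤ (x + y).order := by
          have := HahnSeries.min_order_le_order_add hsum
          rwa [← hab, min_self] at this
        rcases hord.eq_or_lt with hord | hord
        · rw [ELTrop_of_ne hsum, ← hord, hco]
          refine ⟨none, rfl, ?_⟩
          show some (eltAdd _ _) = _
          rw [heq]
          rfl
        · have hz : x.coeff x.order + y.coeff y.order = 0 := by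
            rw [← hco]; exact HahnSeries.coeff_eq_zero_of_lt_order hord
          refine ⟨some (-x.order, x.coeff x.order + y.coeff y.order), by simp [sBar, hz], ?_⟩
          rw [ELTrop_of_ne hsum]
          show some (eltAdd _ _) = some (eltAdd _ _)
          rw [heq, eltAdd_right (neg_lt_neg hord)]
    · -- y dominates
      have hx0 : x.coeff y.order = 0 := HahnSeries.coeff_eq_zero_of_lt_order hab
      have hco : (x + y).coeff y.order = y.coeff y.order := by
        rw [HahnSeries.coeff_add, hx0, zero_add]
      have hne : x + y ≠ 0 := HahnSeries.ne_zero_of_coeff_ne_zero (hco ▸ hcyne)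
      have hord : (x + y).order = y.order := by
        refine le_antisymm (HahnSeries.order_le_of_coeff_ne_zero (hco ▸ hcyne)) ?_
        have := HahnSeries.min_order_le_order_add hne
        rwa [min_eq_right hab.le] at this
      rw [ELTrop_of_ne hne, hord, hco]
      refine ⟨none, rfl, ?_⟩
      show some (eltAdd _ _) = _
      rw [eltAdd_right (neg_lt_neg hab)]
      rfl
  -- multiplication
  have hMul : eMul (ELTrop x) (ELTrop y)
      = some (-(x.order + y.order), x.coeff x.order * y.coeff y.order) := by
    rw [hEx, hEy]
    show some (eltMul _ _) = _
    rw [eltMul, neg_add]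
  have key : x.coeff x.order * y.coeff y.order ≠ 0 →
      ELTrop (x * y) = eMul (ELTrop x) (ELTrop y) := by
    intro hcc
    have hne : x * y ≠ 0 := HahnSeries.ne_zero_of_coeff_ne_zero (hmulcoeff ▸ hcc)
    have hord : (x * y).order = x.order + y.order :=
      le_antisymm (HahnSeries.order_le_of_coeff_ne_zero (hmulcoeff ▸ hcc))
        (order_add_order_le_order_mul hx hy hne)
    rw [ELTrop_of_ne hne, hord, hmulcoeff, hMul]
  refine ⟨?_, fun _ => key (mul_ne_zero hcxne hcyne)⟩
  by_cases hcc : x.coeff x.order * y.coeff y.order = 0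
  · rw [hMul]
    by_cases hne : x * y = 0
    · refine ⟨some (-(x.order + y.order), x.coeff x.order * y.coeff y.order),
        by simp [sBar, hcc], ?_⟩
      have hE0 : ELTrop (x * y) = none := if_pos hne
      rw [hE0]
      rfl
    · have hord : x.order + y.order < (x * y).order :=
        (order_add_order_le_order_mul hx hy hne).lt_of_ne
          (fun h => (h ▸ (mt HahnSeries.coeff_order_eq_zero.mp hne)) (hmulcoeff ▸ hcc))
      refine ⟨some (-(x.order + y.order), x.coeff x.order * y.coeff y.order),
        by simp [sBar, hcc], ?_⟩
      rw [ELTrop_of_ne hne]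
      show _ = some (eltAdd _ _)
      rw [eltAdd_right (neg_lt_neg hord)]
  · rw [key hcc]; exact eSurp_refl _
end

section
/- Transfer principle for ELT rings (surpassing form): let P, Q be polynomial expressions (formal differences of positive polynomial expressions) in variables λ₁,…,λ_m. If the identity P = Q holds in all commutative rings and the identity P ≥ Q holds in all commutative tropical (max-plus) algebras, then P(r₁,…,r_m) ⊨ Q(r₁,…,r_m) for all r₁,…,r_m in any commutative ELT ring R. -/
/-- The negation map on R̄, (a, ℓ) ↦ (a, −ℓ). -/
def eNeg {F L : Type*} [Neg L] (x : Option (F × L)) : Option (F × L) :=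
  x.map (fun w => (w.1, -w.2))

/-- Positive polynomial expressions in m variables, built from 0, 1, variables,
addition and multiplication. -/
inductive PPE (m : ℕ) : Type
  | zero : PPE m
  | one : PPE m
  | var : Fin m → PPE m
  | add : PPE m → PPE m → PPE m
  | mul : PPE m → PPE m → PPE m

/-- Evaluation of a positive polynomial expression in a commutative (semi)ring. -/
def PPE.evalS {m : ℕ} {S : Type*} [CommSemiring S] : PPE m → (Fin m → S) → S
  | .zero, _ => 0
  | .one, _ => 1
  | .var i, v => v i
  | .add p q, v => p.evalS v + q.evalS v
  | .mul p q, v => p.evalS v * q.evalS v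

/-- Evaluation of a positive polynomial expression in the tropical (max-plus)
algebra over an ordered abelian group G, with −∞ adjoined. -/
def PPE.evalTrop {m : ℕ} {G : Type*} [AddCommGroup G] [LinearOrder G] [IsOrderedAddMonoid G] :
    PPE m → (Fin m → WithBot G) → WithBot G
  | .zero, _ => ⊥
  | .one, _ => ((0 : G) : WithBot G)
  | .var i, v => v i
  | .add p q, v => max (p.evalTrop v) (q.evalTrop v)
  | .mul p q, v => p.evalTrop v + q.evalTrop v

/-- Evaluation of a positive polynomial expression in an ELT ring (with −∞). -/
def PPE.evalELT {m : ℕ} {F L : Type*} [AddCommGroup F] [LinearOrder F] [IsOrderedAddMonoid F] [CommRing L] :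
    PPE m → (Fin m → Option (F × L)) → Option (F × L)
  | .zero, _ => none
  | .one, _ => some ((0 : F), (1 : L))
  | .var i, v => v i
  | .add p q, v => eAdd (p.evalELT v) (q.evalELT v)
  | .mul p q, v => eMul (p.evalELT v) (q.evalELT v)

section Lemmas
variable {F L : Type*} [AddCommGroup F] [LinearOrder F] [IsOrderedAddMonoid F] [CommRing L]

lemma eltAdd_left_s9 (a b : F × L) (h : b.1 < a.1) : eltAdd a b = a := if_pos h

lemma eltAdd_right_s9 (a b : F × L) (h : a.1 < b.1) : eltAdd a b = b := by
  unfold eltAdd; rw [if_neg (asymm h), if_pos h]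

lemma eltAdd_tie (a b : F × L) (h : a.1 = b.1) : eltAdd a b = (a.1, a.2 + b.2) := by
  unfold eltAdd
  rw [if_neg (by rw [h]; exact lt_irrefl _), if_neg (by rw [h]; exact lt_irrefl _)]

lemma eltAdd_fst (a b : F × L) : (eltAdd a b).1 = max a.1 b.1 := by
  rcases lt_trichotomy a.1 b.1 with h|h|h
  · rw [eltAdd_right_s9 a b h, max_eq_right h.le]
  · rw [eltAdd_tie a b h]; exact (max_eq_left h.ge).symm
  · rw [eltAdd_left_s9 a b h, max_eq_left h.le]

lemma eltAdd_comm (a b : F × L) : eltAdd a b = eltAdd b a := by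
  rcases lt_trichotomy a.1 b.1 with h|h|h
  · rw [eltAdd_right_s9 a b h, eltAdd_left_s9 b a h]
  · rw [eltAdd_tie a b h, eltAdd_tie b a h.symm, h, add_comm]
  · rw [eltAdd_left_s9 a b h, eltAdd_right_s9 b a h]

lemma eltAdd_assoc (a b c : F × L) : eltAdd (eltAdd a b) c = eltAdd a (eltAdd b c) := by
  rcases lt_trichotomy a.1 b.1 with hab|hab|hab
  · rw [eltAdd_right_s9 a b hab]
    rcases lt_trichotomy b.1 c.1 with hbc|hbc|hbc
    · rw [eltAdd_right_s9 b c hbc, eltAdd_right_s9 a c (hab.trans hbc)]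
    · rw [eltAdd_tie b c hbc, eltAdd_right_s9 a (b.1, b.2 + c.2) hab]
    · rw [eltAdd_left_s9 b c hbc, eltAdd_right_s9 a b hab]
  · rw [eltAdd_tie a b hab]
    rcases lt_trichotomy b.1 c.1 with hbc|hbc|hbc
    · rw [eltAdd_right_s9 (a.1, a.2 + b.2) c (by simpa [hab] using hbc),
        eltAdd_right_s9 b c hbc, eltAdd_right_s9 a c (hab ▸ hbc)]
    · rw [eltAdd_tie (a.1, a.2 + b.2) c (by simpa [hab] using hbc),
        eltAdd_tie b c hbc, eltAdd_tie a (b.1, b.2 + c.2) (by simpa using hab)]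
      simp [add_assoc]
    · rw [eltAdd_left_s9 (a.1, a.2 + b.2) c (by simpa [hab] using hbc),
        eltAdd_left_s9 b c hbc, eltAdd_tie a b hab]
  · rw [eltAdd_left_s9 a b hab]
    rcases lt_trichotomy b.1 c.1 with hbc|hbc|hbc
    · rw [eltAdd_right_s9 b c hbc]
    · rw [eltAdd_tie b c hbc, eltAdd_left_s9 a (b.1, b.2 + c.2) (by simpa using hab),
        eltAdd_left_s9 a c (hbc ▸ hab)]
    · rw [eltAdd_left_s9 b c hbc, eltAdd_left_s9 a b hab, eltAdd_left_s9 a c (hbc.trans hab)]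

end Lemmas

section Lemmas2
variable {F L : Type*} [AddCommGroup F] [LinearOrder F] [IsOrderedAddMonoid F] [CommRing L]

lemma eAdd_none (x : Option (F × L)) : eAdd x none = x := by cases x <;> rfl

lemma eAdd_comm' (x y : Option (F × L)) : eAdd x y = eAdd y x := by
  cases x <;> cases y <;> simp [eAdd, eltAdd_comm]

lemma eAdd_assoc' (x y z : Option (F × L)) :
    eAdd (eAdd x y) z = eAdd x (eAdd y z) := by
  cases x <;> cases y <;> cases z <;> simp [eAdd, eltAdd_assoc]

lemma eMul_eAdd (x y z : Option (F × L)) :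
    eMul x (eAdd y z) = eAdd (eMul x y) (eMul x z) := by
  cases x with
  | none => cases y <;> cases z <;> rfl
  | some a =>
    cases y with
    | none => cases z <;> rfl
    | some b =>
      cases z with
      | none => rfl
      | some c =>
        simp only [eAdd, eMul, eltMul]
        congr 1
        rcases lt_trichotomy b.1 c.1 with h|h|h
        · rw [eltAdd_right_s9 b c h, eltAdd_right_s9 _ _ (by simpa using add_lt_add_left h a.1)]
        · rw [eltAdd_tie b c h, eltAdd_tie (a.1 + b.1, a.2 * b.2) _ (by simpa using h)]
          simp [mul_add]
        · rw [eltAdd_left_s9 b c h, eltAdd_left_s9 _ _ (by simpa using add_lt_add_left h a.1)]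

instance eltZero : Zero (Option (F × L)) := ⟨none⟩
instance eltOne : One (Option (F × L)) := ⟨some (0, 1)⟩
instance eltAddInst : Add (Option (F × L)) := ⟨eAdd⟩
instance eltMulInst : Mul (Option (F × L)) := ⟨eMul⟩

instance eltCommSemiring : CommSemiring (Option (F × L)) where
  add_assoc := eAdd_assoc'
  zero_add := fun x => rfl
  add_zero := eAdd_none
  add_comm := eAdd_comm'
  nsmul := nsmulRec
  mul_assoc := by
    intro x y z
    show eMul (eMul x y) z = eMul x (eMul y z)
    cases x <;> cases y <;> cases z <;> simp [eMul, eltMul, add_assoc, mul_assoc]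
  one_mul := by
    intro x
    show eMul (some ((0:F), (1:L))) x = x
    cases x <;> simp [eMul, eltMul]
  mul_one := by
    intro x
    show eMul x (some ((0:F), (1:L))) = x
    cases x <;> simp [eMul, eltMul]
  mul_comm := by
    intro x y
    show eMul x y = eMul y x
    cases x <;> cases y <;> simp [eMul, eltMul, add_comm, mul_comm]
  left_distrib := eMul_eAdd
  right_distrib := by
    intro x y z
    show eMul (eAdd x y) z = eAdd (eMul x z) (eMul y z)
    calc eMul (eAdd x y) z = eMul z (eAdd x y) := by
          cases x <;> cases y <;> cases z <;> simp [eMul, eAdd, eltMul, add_comm, mul_comm]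
      _ = eAdd (eMul z x) (eMul z y) := eMul_eAdd z x y
      _ = eAdd (eMul x z) (eMul y z) := by
          cases x <;> cases y <;> cases z <;> simp [eMul, eAdd, eltMul, add_comm, mul_comm]
  zero_mul := fun x => rfl
  mul_zero := by
    intro x
    show eMul x none = none
    cases x <;> rfl

end Lemmas2

noncomputable def PPE.toPoly {m : ℕ} : PPE m → MvPolynomial (Fin m) ℕ
  | .zero => 0
  | .one => 1
  | .var i => MvPolynomial.X i
  | .add p q => p.toPoly + q.toPoly
  | .mul p q => p.toPoly * q.toPoly

lemma PPE.evalS_eq_eval₂ {m : ℕ} {S : Type*} [CommSemiring S] (f : ℕ →+* S)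
    (v : Fin m → S) (p : PPE m) :
    p.evalS v = MvPolynomial.eval₂ f v p.toPoly := by
  induction p with
  | zero => simp [toPoly, evalS]
  | one => simp [toPoly, evalS]
  | var i => simp [toPoly, evalS]
  | add p q hp hq => simp [toPoly, evalS, MvPolynomial.eval₂_add, hp, hq]
  | mul p q hp hq => simp [toPoly, evalS, MvPolynomial.eval₂_mul, hp, hq]

lemma PPE.evalS_X {m : ℕ} {R : Type*} [CommSemiring R] (p : PPE m) :
    p.evalS (MvPolynomial.X : Fin m → MvPolynomial (Fin m) R)
      = MvPolynomial.map (Nat.castRingHom R) p.toPoly := by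
  induction p with
  | zero => simp [toPoly, evalS]
  | one => simp [toPoly, evalS]
  | var i => simp [toPoly, evalS]
  | add p q hp hq => simp [toPoly, evalS, hp, hq]
  | mul p q hp hq => simp [toPoly, evalS, hp, hq]

lemma key_poly {m : ℕ} (P Q : PPE m × PPE m)
    (hRing : ∀ (S : Type) [CommRing S] (v : Fin m → S),
      P.1.evalS v - P.2.evalS v = Q.1.evalS v - Q.2.evalS v) :
    P.1.toPoly + Q.2.toPoly = Q.1.toPoly + P.2.toPoly := by
  have h := hRing (MvPolynomial (Fin m) ℤ) MvPolynomial.X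
  rw [sub_eq_sub_iff_add_eq_add] at h
  simp only [PPE.evalS_X] at h
  rw [← map_add, ← map_add] at h
  exact MvPolynomial.map_injective (Nat.castRingHom ℤ)
    (fun a b => by simpa using id) h

lemma key_semiring {m : ℕ} (P Q : PPE m × PPE m)
    (hRing : ∀ (S : Type) [CommRing S] (v : Fin m → S),
      P.1.evalS v - P.2.evalS v = Q.1.evalS v - Q.2.evalS v)
    {S : Type*} [CommSemiring S] (v : Fin m → S) :
    P.1.evalS v + Q.2.evalS v = Q.1.evalS v + P.2.evalS v := by
  have h := congrArg (MvPolynomial.eval₂ (Nat.castRingHom S) v) (key_poly P Q hRing)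
  simpa [MvPolynomial.eval₂_add, ← PPE.evalS_eq_eval₂] using h
section Lemmas3
variable {F L : Type*} [AddCommGroup F] [LinearOrder F] [IsOrderedAddMonoid F] [CommRing L]

lemma PPE.evalELT_eq_evalS {m : ℕ} (p : PPE m) (v : Fin m → Option (F × L)) :
    p.evalELT v = p.evalS v := by
  induction p with
  | zero => rfl
  | one => rfl
  | var i => rfl
  | add p q hp hq => show eAdd _ _ = _ + _ ; rw [hp, hq]; rfl
  | mul p q hp hq => show eMul _ _ = _ * _ ; rw [hp, hq]; rfl

def tval (x : Option (F × L)) : WithBot F := (x.map Prod.fst : Option F)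

@[simp] lemma tval_none : tval (none : Option (F × L)) = ⊥ := rfl
@[simp] lemma tval_some (a : F × L) : tval (some a) = (a.1 : WithBot F) := rfl

lemma tval_eAdd (x y : Option (F × L)) : tval (eAdd x y) = max (tval x) (tval y) := by
  cases x with
  | none => simp [eAdd]
  | some a =>
    cases y with
    | none => simp [eAdd_none]
    | some b =>
      show tval (some (eltAdd a b)) = _
      rw [tval_some, tval_some, tval_some, eltAdd_fst, WithBot.coe_max]

lemma tval_eMul (x y : Option (F × L)) : tval (eMul x y) = tval x + tval y := by
  cases x with
  | none => simp [eMul]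
  | some a =>
    cases y with
    | none => simp [eMul]
    | some b => show tval (some (eltMul a b)) = _ ; simp [eltMul]

lemma PPE.tval_evalELT {m : ℕ} (p : PPE m) (v : Fin m → Option (F × L)) :
    tval (p.evalELT v) = p.evalTrop (fun i => tval (v i)) := by
  induction p with
  | zero => rfl
  | one => rfl
  | var i => rfl
  | add p q hp hq => rw [PPE.evalELT, PPE.evalTrop, tval_eAdd, hp, hq]
  | mul p q hp hq => rw [PPE.evalELT, PPE.evalTrop, tval_eMul, hp, hq]

@[simp] lemma eNeg_eNeg (x : Option (F × L)) : eNeg (eNeg x) = x := by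
  cases x <;> simp [eNeg]

@[simp] lemma tval_eNeg (x : Option (F × L)) : tval (eNeg x) = tval x := by
  cases x <;> rfl

lemma eNeg_eAdd (x y : Option (F × L)) :
    eNeg (eAdd x y) = eAdd (eNeg x) (eNeg y) := by
  cases x with
  | none => rfl
  | some a =>
    cases y with
    | none => rfl
    | some b =>
      show some _ = some _
      congr 1
      rcases lt_trichotomy a.1 b.1 with h|h|h
      · rw [eltAdd_right_s9 a b h, eltAdd_right_s9 (a.1, -a.2) (b.1, -b.2) h]
      · rw [eltAdd_tie a b h, eltAdd_tie (a.1, -a.2) (b.1, -b.2) h]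
        simp [neg_add, add_comm]
      · rw [eltAdd_left_s9 a b h, eltAdd_left_s9 (a.1, -a.2) (b.1, -b.2) h]

lemma sBar_selfAdd (w : Option (F × L)) : sBar (eAdd w (eNeg w)) = 0 := by
  cases w with
  | none => rfl
  | some a =>
    show sBar (some (eltAdd a (a.1, -a.2))) = 0
    rw [eltAdd_tie a (a.1, -a.2) rfl]
    simp [sBar]

lemma eAdd_eNeg_self (a : F × L) :
    eAdd (some a) (eNeg (some a)) = some (a.1, 0) := by
  show some (eltAdd a (a.1, -a.2)) = _
  rw [eltAdd_tie a (a.1, -a.2) rfl]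
  simp

lemma eAdd_layerzero (x : Option (F × L)) (b : F) (h : (b : WithBot F) ≤ tval x) :
    eAdd x (some (b, 0)) = x := by
  cases x with
  | none => simp at h
  | some a =>
    rw [tval_some] at h
    have hb : b ≤ a.1 := WithBot.coe_le_coe.1 h
    show some (eltAdd a (b, 0)) = some a
    rcases eq_or_lt_of_le hb with h'|h'
    · rw [eltAdd_tie a (b, 0) h'.symm]
      simp
    · rw [eltAdd_left_s9 a (b, 0) h']

end Lemmas3
section Lemmas4
variable {F L : Type*} [AddCommGroup F] [LinearOrder F] [IsOrderedAddMonoid F] [CommRing L]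

lemma eAdd_absorb (X Y : Option (F × L)) (h : tval Y ≤ tval X) :
    eAdd X (eAdd Y (eNeg Y)) = X := by
  cases Y with
  | none => exact eAdd_none X
  | some b =>
    rw [eAdd_eNeg_self b]
    exact eAdd_layerzero X b.1 (by simpa using h)

lemma main_aux (A B C D : Option (F × L))
    (hW : eAdd A D = eAdd C B)
    (htv : max (tval C) (tval D) ≤ max (tval A) (tval B)) :
    eSurp (eAdd A (eNeg B)) (eAdd C (eNeg D)) := by
  refine ⟨eAdd (eAdd A (eNeg B)) (eNeg (eAdd C (eNeg D))), ?_, ?_⟩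
  · have e1 : eAdd (eAdd A (eNeg B)) (eNeg (eAdd C (eNeg D)))
        = eAdd (eAdd A D) (eNeg (eAdd C B)) := by
      rw [eNeg_eAdd C (eNeg D), eNeg_eNeg, eNeg_eAdd C B]
      show (A + eNeg B) + (eNeg C + D) = (A + D) + (eNeg C + eNeg B)
      abel
    rw [e1, hW]
    exact sBar_selfAdd _
  · have hxy : tval (eAdd C (eNeg D)) ≤ tval (eAdd A (eNeg B)) := by
      rw [tval_eAdd, tval_eAdd, tval_eNeg, tval_eNeg]; exact htv
    have e2 : eAdd (eAdd C (eNeg D)) (eAdd (eAdd A (eNeg B)) (eNeg (eAdd C (eNeg D))))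
        = eAdd (eAdd A (eNeg B)) (eAdd (eAdd C (eNeg D)) (eNeg (eAdd C (eNeg D)))) := by
      show (C + eNeg D) + ((A + eNeg B) + eNeg (C + eNeg D))
          = (A + eNeg B) + ((C + eNeg D) + eNeg (C + eNeg D))
      abel
    rw [e2, eAdd_absorb _ _ hxy]

end Lemmas4
section MapTrop
variable {A B : Type*} [AddCommGroup A] [LinearOrder A] [IsOrderedAddMonoid A] [AddCommGroup B] [LinearOrder B] [IsOrderedAddMonoid B]
  (g : A → B) (hmono : Monotone g) (hadd : ∀ x y, g (x + y) = g x + g y) (h0 : g 0 = 0)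

include hmono in
lemma wmap_mono : ∀ x y : WithBot A, x ≤ y → WithBot.map g x ≤ WithBot.map g y := by
  intro x y h
  cases x with
  | bot => rw [WithBot.map_bot]; exact bot_le
  | coe a =>
    cases y with
    | bot => simp at h
    | coe b =>
      simp only [WithBot.map, Option.map_some]
      exact WithBot.coe_le_coe.2 (hmono (WithBot.coe_le_coe.1 h))

include hmono in
lemma wmap_max (x y : WithBot A) :
    WithBot.map g (max x y) = max (WithBot.map g x) (WithBot.map g y) := by
  cases x with
  | bot => simp
  | coe a =>
    cases y with
    | bot => simp
    | coe b =>
      rw [← WithBot.coe_max, WithBot.map_coe, WithBot.map_coe, WithBot.map_coe,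
        ← WithBot.coe_max, hmono.map_max]

include hadd in
lemma wmap_add (x y : WithBot A) :
    WithBot.map g (x + y) = WithBot.map g x + WithBot.map g y := by
  cases x with
  | bot => rw [WithBot.bot_add, WithBot.map_bot, WithBot.bot_add]
  | coe a =>
    cases y with
    | bot => rw [WithBot.add_bot, WithBot.map_bot, WithBot.add_bot]
    | coe b =>
      rw [← WithBot.coe_add, WithBot.map_coe, WithBot.map_coe, WithBot.map_coe,
        ← WithBot.coe_add, hadd]

include hmono hadd h0 in
lemma evalTrop_map {m : ℕ} (p : PPE m) (w : Fin m → WithBot A) :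
    WithBot.map g (p.evalTrop w) = p.evalTrop (fun i => WithBot.map g (w i)) := by
  induction p with
  | zero => rfl
  | one => rw [PPE.evalTrop, PPE.evalTrop, WithBot.map_coe, h0]
  | var i => rfl
  | add p q hp hq => rw [PPE.evalTrop, PPE.evalTrop, wmap_max g hmono, hp, hq]
  | mul p q hp hq => rw [PPE.evalTrop, PPE.evalTrop, wmap_add g hadd, hp, hq]

end MapTrop

lemma trop_down {m : ℕ} (P Q : PPE m × PPE m)
    (hTrop : ∀ (G : Type) [AddCommGroup G] [LinearOrder G] [IsOrderedAddMonoid G] (v : Fin m → WithBot G),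
      max (Q.1.evalTrop v) (Q.2.evalTrop v) ≤ max (P.1.evalTrop v) (P.2.evalTrop v))
    {F : Type*} [AddCommGroup F] [LinearOrder F] [IsOrderedAddMonoid F] (w : Fin m → WithBot F) :
    max (Q.1.evalTrop w) (Q.2.evalTrop w) ≤ max (P.1.evalTrop w) (P.2.evalTrop w) := by
  classical
  set a : Fin m → F := fun i => (w i).unbotD 0 with ha
  set ψ : (Fin m → ℤ) →+ F :=
    AddMonoidHom.mk' (fun c => ∑ i, c i • a i)
      (by intro c d; simp [add_zsmul, Finset.sum_add_distrib]) with hψ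
  haveI : Countable ↥ψ.range := ψ.rangeRestrict_surjective.countable
  haveI : Small.{0} ↥ψ.range := Countable.toSmall _
  set S : Type := Shrink.{0} ↥ψ.range with hS
  let e : S ≃ ↥ψ.range := (equivShrink ↥ψ.range).symm
  letI addS : AddCommGroup S := Equiv.addCommGroup e
  let g : S → F := fun x => ((e x : ↥ψ.range) : F)
  have hg : Function.Injective g := fun x y hxy => e.injective (Subtype.ext hxy)
  letI leS : LinearOrder S := LinearOrder.lift' g hg
  have hgadd : ∀ x y : S, g (x + y) = g x + g y := by
    intro x y
    show ((e (x + y) : ↥ψ.range) : F) = _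
    rw [e.add_def x y, e.apply_symm_apply]
    rfl
  have hg0 : g 0 = 0 := by
    show ((e 0 : ↥ψ.range) : F) = 0
    rw [e.zero_def, e.apply_symm_apply]
    rfl
  haveI : IsOrderedAddMonoid S :=
    { add_le_add_left := by
        intro x y h c
        have h' : g x ≤ g y := h
        show g (x + c) ≤ g (y + c)
        rw [hgadd, hgadd]
        exact add_le_add h' le_rfl }
  have hgmono : Monotone g := fun x y h => h
  have hmem : ∀ i, a i ∈ ψ.range := by
    intro i
    refine ⟨Pi.single i 1, ?_⟩
    show ∑ j, Pi.single i 1 j • a j = a i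
    simp [Pi.single_apply]
  have hv : ∀ i, ∃ y : WithBot S, WithBot.map g y = w i := by
    intro i
    cases hw : w i with
    | bot => exact ⟨⊥, rfl⟩
    | coe x =>
      have hax : a i = x := by rw [ha]; simp [hw]
      refine ⟨((equivShrink ↥ψ.range ⟨x, hax ▸ hmem i⟩ : S) : WithBot S), ?_⟩
      rw [WithBot.map_coe]
      show ((((e (equivShrink ↥ψ.range ⟨x, hax ▸ hmem i⟩) : ↥ψ.range) : F)) : WithBot F) = _
      rw [show e (equivShrink ↥ψ.range ⟨x, hax ▸ hmem i⟩) = ⟨x, hax ▸ hmem i⟩ from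
        (equivShrink ↥ψ.range).symm_apply_apply _]
  choose v' hv' using hv
  have h := hTrop S v'
  have h2 := wmap_mono g hgmono _ _ h
  rw [wmap_max g hgmono, wmap_max g hgmono,
    evalTrop_map g hgmono hgadd hg0, evalTrop_map g hgmono hgadd hg0,
    evalTrop_map g hgmono hgadd hg0, evalTrop_map g hgmono hgadd hg0] at h2
  have hfun : (fun i => WithBot.map g (v' i)) = w := funext hv'
  rwa [hfun] at h2

/-- ELT transfer principle, surpassing form.  A polynomial expression is a formal
difference `(P⁺, P⁻)` of positive polynomial expressions.  If `P = Q` holds in all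
commutative rings and `P ≥ Q` holds in all commutative tropical (max-plus)
algebras, then `P ⊨ Q` in every commutative ELT ring. -/
theorem elt_transfer_principle_surpassing {m : ℕ} (P Q : PPE m × PPE m)
    (hRing : ∀ (S : Type) [CommRing S] (v : Fin m → S),
      P.1.evalS v - P.2.evalS v = Q.1.evalS v - Q.2.evalS v)
    (hTrop : ∀ (G : Type) [AddCommGroup G] [LinearOrder G] [IsOrderedAddMonoid G] (v : Fin m → WithBot G),
      max (Q.1.evalTrop v) (Q.2.evalTrop v) ≤ max (P.1.evalTrop v) (P.2.evalTrop v))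
    {F L : Type*} [AddCommGroup F] [LinearOrder F] [IsOrderedAddMonoid F] [CommRing L]
    (v : Fin m → Option (F × L)) :
    eSurp (eAdd (P.1.evalELT v) (eNeg (P.2.evalELT v)))
      (eAdd (Q.1.evalELT v) (eNeg (Q.2.evalELT v))) := by
  apply main_aux
  · have h := key_semiring P Q hRing v
    rw [← PPE.evalELT_eq_evalS, ← PPE.evalELT_eq_evalS, ← PPE.evalELT_eq_evalS,
      ← PPE.evalELT_eq_evalS] at h
    exact h
  · have h := trop_down P Q hTrop (fun i => tval (v i))
    rw [← PPE.tval_evalELT, ← PPE.tval_evalELT, ← PPE.tval_evalELT,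
      ← PPE.tval_evalELT] at h
    exact h
end

section
/- For n×n matrices A, B over a commutative ELT ring R (with entries allowed to be −∞), det(AB) ⊨ det(A)·det(B), where det(M) = Σ_{σ∈S_n} sgn(σ)·m_{1,σ(1)}⋯m_{n,σ(n)} with sgn(σ) interpreted as the layer element (0, ±1). -/
/-- Finite sums in R̄ (the result is independent of the enumeration order since
`eAdd` is commutative and associative with identity −∞). -/
noncomputable def eSumF {F L α : Type*} [Fintype α] [LinearOrder F] [Add L]
    (f : α → Option (F × L)) : Option (F × L) :=
  ((Finset.univ : Finset α).toList.map f).foldr eAdd none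

/-- Finite products in R̄. -/
def eProd {F L : Type*} [Zero F] [Add F] [One L] [Mul L] {k : ℕ}
    (f : Fin k → Option (F × L)) : Option (F × L) :=
  (List.ofFn f).foldr eMul (some ((0 : F), (1 : L)))

/-- The ELT determinant, with sgn(σ) interpreted as the layer element (0, ±1). -/
noncomputable def eltDet {F L : Type*} [AddCommGroup F] [LinearOrder F] [IsOrderedAddMonoid F] [CommRing L] {n : ℕ}
    (A : Matrix (Fin n) (Fin n) (Option (F × L))) : Option (F × L) :=
  eSumF fun σ : Equiv.Perm (Fin n) =>
    eMul (some ((0 : F), ((Equiv.Perm.sign σ : ℤ) : L))) (eProd fun i => A i (σ i))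

/-- Matrix multiplication over R̄. -/
noncomputable def eMatMul {F L : Type*} [AddCommGroup F] [LinearOrder F] [IsOrderedAddMonoid F] [CommRing L] {n : ℕ}
    (A B : Matrix (Fin n) (Fin n) (Option (F × L))) :
    Matrix (Fin n) (Fin n) (Option (F × L)) :=
  fun i j => eSumF fun k => eMul (A i k) (B k j)

/-- The identity matrix over R̄. -/
def eId {F L : Type*} [AddCommGroup F] [LinearOrder F] [IsOrderedAddMonoid F] [CommRing L] (n : ℕ) :
    Matrix (Fin n) (Fin n) (Option (F × L)) :=
  fun i j => if i = j then some ((0 : F), (1 : L)) else none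





set_option linter.unusedSectionVars false

namespace EltProof

variable {F L : Type*} [AddCommGroup F] [LinearOrder F] [IsOrderedAddMonoid F] [CommRing L]

lemma eltAdd_comm (x y : F × L) : eltAdd x y = eltAdd y x := by
  obtain ⟨a, s⟩ := x; obtain ⟨b, t⟩ := y
  simp only [eltAdd]
  split_ifs <;>
    first
    | rfl
    | (simp_all [lt_asymm, lt_irrefl, add_comm]; try exact le_antisymm ‹_› ‹_›)

lemma eltAdd_assoc (x y z : F × L) : eltAdd (eltAdd x y) z = eltAdd x (eltAdd y z) := by
  obtain ⟨a, s⟩ := x; obtain ⟨b, t⟩ := y; obtain ⟨c, u⟩ := z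
  rcases lt_trichotomy a b with h1 | h1 | h1 <;>
    rcases lt_trichotomy b c with h2 | h2 | h2 <;>
      subst_vars <;>
      (try have h3 := h1.trans h2) <;>
      (try have h4 := h2.trans h1) <;>
      simp only [eltAdd] <;>
      split_ifs <;>
      first
      | rfl
      | simp_all [lt_asymm, lt_irrefl, add_assoc]

lemma eltMul_eltAdd (a b c : F × L) : eltMul a (eltAdd b c) = eltAdd (eltMul a b) (eltMul a c) := by
  obtain ⟨x, s⟩ := a; obtain ⟨y, t⟩ := b; obtain ⟨z, u⟩ := c
  simp only [eltAdd, eltMul, add_lt_add_iff_left]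
  split_ifs <;> simp_all [mul_add]

lemma eltAdd_eltMul (a b c : F × L) : eltMul (eltAdd a b) c = eltAdd (eltMul a c) (eltMul b c) := by
  obtain ⟨x, s⟩ := a; obtain ⟨y, t⟩ := b; obtain ⟨z, u⟩ := c
  simp only [eltAdd, eltMul, add_lt_add_iff_right]
  split_ifs <;> simp_all [add_mul]

instance : Zero (Option (F × L)) := ⟨none⟩
instance : One (Option (F × L)) := ⟨some ((0 : F), (1 : L))⟩
instance : Add (Option (F × L)) := ⟨eAdd⟩
instance : Mul (Option (F × L)) := ⟨eMul⟩

lemma eAdd_def (x y : Option (F × L)) : x + y = eAdd x y := rfl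
lemma eMul_def (x y : Option (F × L)) : x * y = eMul x y := rfl
lemma zero_def : (0 : Option (F × L)) = none := rfl
lemma one_def : (1 : Option (F × L)) = some ((0 : F), (1 : L)) := rfl

set_option maxHeartbeats 1000000 in
instance : CommSemiring (Option (F × L)) where
  add_assoc x y z := by cases x <;> cases y <;> cases z <;>
    simp [eAdd_def, eAdd, eltAdd_assoc]
  zero_add x := by cases x <;> rfl
  add_zero x := by cases x <;> rfl
  add_comm x y := by cases x <;> cases y <;> simp [eAdd_def, eAdd, eltAdd_comm]
  nsmul := nsmulRec
  mul_assoc x y z := by cases x <;> cases y <;> cases z <;>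
    simp [eMul_def, eMul, eltMul, add_assoc, mul_assoc]
  one_mul x := by cases x <;> simp [eMul_def, eMul, one_def, eltMul]
  mul_one x := by cases x <;> simp [eMul_def, eMul, one_def, eltMul]
  mul_comm x y := by cases x <;> cases y <;> simp [eMul_def, eMul, eltMul, add_comm, mul_comm]
  zero_mul x := by cases x <;> rfl
  mul_zero x := by cases x <;> rfl
  left_distrib x y z := by cases x <;> cases y <;> cases z <;>
    simp [eMul_def, eAdd_def, eMul, eAdd, eltMul_eltAdd]
  right_distrib x y z := by cases x <;> cases y <;> cases z <;>
    simp [eMul_def, eAdd_def, eMul, eAdd, eltAdd_eltMul]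

lemma eSumF_eq {α : Type*} [Fintype α] (f : α → Option (F × L)) :
    eSumF f = ∑ a, f a := by
  have h : eSumF f = ((Finset.univ : Finset α).toList.map f).sum := by
    rw [List.sum_eq_foldr]; rfl
  rw [h, Finset.sum_map_toList]

lemma eProd_eq {k : ℕ} (f : Fin k → Option (F × L)) : eProd f = ∏ i, f i := by
  have h : eProd f = (List.ofFn f).prod := by rw [List.prod_eq_foldr]; rfl
  rw [h, List.prod_ofFn]

/-- Ghost elements: layer 0 (including −∞). -/
def ghost (x : Option (F × L)) : Prop := sBar x = 0

lemma ghost_zero : ghost (0 : Option (F × L)) := rfl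

lemma ghost_add {x y : Option (F × L)} (hx : ghost x) (hy : ghost y) : ghost (x + y) := by
  cases x with
  | none => exact hy
  | some a =>
    cases y with
    | none => exact hx
    | some b =>
      have ha : a.2 = 0 := hx
      have hb : b.2 = 0 := hy
      show sBar (some (eltAdd a b)) = 0
      simp only [sBar, Option.map_some, Option.getD_some, eltAdd]
      split_ifs <;> simp [ha, hb]

lemma ghost_mul {x : Option (F × L)} (hx : ghost x) (y : Option (F × L)) :
    ghost (x * y) := by
  cases x with
  | none => cases y <;> exact rfl
  | some a =>
    cases y with
    | none => exact rfl
    | some b =>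
      have ha : a.2 = 0 := hx
      show sBar (some (eltMul a b)) = 0
      simp [sBar, eltMul, ha]

lemma ghost_sum {α : Type*} (s : Finset α) (f : α → Option (F × L))
    (h : ∀ a ∈ s, ghost (f a)) : ghost (∑ a ∈ s, f a) :=
  Finset.sum_induction f ghost (fun _ _ => ghost_add) ghost_zero h

lemma ghost_pair (c : L) (P : Option (F × L)) :
    ghost (some ((0 : F), c) * P + some ((0 : F), -c) * P) := by
  cases P with
  | none => exact rfl
  | some q =>
    show sBar (some (eltAdd (eltMul ((0 : F), c) q) (eltMul ((0 : F), -c) q))) = 0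
    simp [sBar, eltAdd, eltMul, lt_irrefl, neg_mul]

lemma ghost_sum_pairs {α : Type*} [DecidableEq α] (s : Finset α) (f : α → Option (F × L))
    (g : α → α) (hmem : ∀ a ∈ s, g a ∈ s) (hinv : ∀ a ∈ s, g (g a) = a)
    (hne : ∀ a ∈ s, g a ≠ a) (hpair : ∀ a ∈ s, ghost (f a + f (g a))) :
    ghost (∑ a ∈ s, f a) := by
  revert hmem hinv hne hpair
  induction s using Finset.strongInduction with
  | _ s ih =>
    intro hmem hinv hne hpair
    rcases s.eq_empty_or_nonempty with rfl | ⟨a, ha⟩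
    · simpa using ghost_zero
    · have hga : g a ∈ s := hmem a ha
      have hnea : g a ≠ a := hne a ha
      set t := (s.erase a).erase (g a) with ht
      have hs : s = insert a (insert (g a) t) := by
        rw [ht, Finset.insert_erase (Finset.mem_erase.2 ⟨hnea, hga⟩), Finset.insert_erase ha]
      have hnot1 : g a ∉ t := Finset.notMem_erase _ _
      have hnot2 : a ∉ insert (g a) t := by
        simp only [Finset.mem_insert, ht, Finset.mem_erase]
        rintro (h | ⟨-, h, -⟩)
        · exact hnea h.symm
        · exact h rfl
      have hmt : ∀ b ∈ t, b ∈ s ∧ b ≠ a ∧ b ≠ g a := by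
        intro b hb
        rw [ht, Finset.mem_erase, Finset.mem_erase] at hb
        exact ⟨hb.2.2, hb.2.1, hb.1⟩
      have hsub : t ⊂ s := by
        refine Finset.ssubset_iff_of_subset (fun b hb => (hmt b hb).1) |>.2 ⟨a, ha, ?_⟩
        intro hat
        exact (hmt a hat).2.1 rfl
      rw [hs, Finset.sum_insert hnot2, Finset.sum_insert hnot1, ← add_assoc]
      refine ghost_add (hpair a ha) ?_
      refine ih t hsub (fun b hb => ?_) (fun b hb => hinv b (hmt b hb).1)
        (fun b hb => hne b (hmt b hb).1) (fun b hb => hpair b (hmt b hb).1)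
      obtain ⟨hbs, hba, hbga⟩ := hmt b hb
      have hgbs : g b ∈ s := hmem b hbs
      rw [ht, Finset.mem_erase, Finset.mem_erase]
      refine ⟨fun h => hba ?_, fun h => hbga ?_, hgbs⟩
      · rw [← hinv b hbs, h, hinv a ha]
      · rw [← hinv b hbs, h]

-- fix the last membership proof separately if needed

/-- The sign factor. -/
def eps {n : ℕ} (σ : Equiv.Perm (Fin n)) : Option (F × L) :=
  some ((0 : F), ((Equiv.Perm.sign σ : ℤ) : L))

lemma eps_mul {n : ℕ} (σ τ : Equiv.Perm (Fin n)) :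
    (eps σ : Option (F × L)) * eps τ = eps (σ * τ) := by
  show (some (eltMul _ _) : Option (F × L)) = _
  simp [eps, eltMul, Equiv.Perm.sign_mul, Units.val_mul, Int.cast_mul]

lemma det_eq {n : ℕ} (M : Matrix (Fin n) (Fin n) (Option (F × L))) :
    eltDet M = ∑ σ : Equiv.Perm (Fin n), eps σ * ∏ i, M i (σ i) := by
  rw [eltDet, eSumF_eq]
  refine Finset.sum_congr rfl fun σ _ => ?_
  rw [show eMul (some ((0 : F), ((Equiv.Perm.sign σ : ℤ) : L))) (eProd fun i => M i (σ i))
      = eps σ * eProd (fun i => M i (σ i)) from rfl, eProd_eq]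

lemma nonbij_ghost {n : ℕ} (A B : Matrix (Fin n) (Fin n) (Option (F × L)))
    (p : Fin n → Fin n) (H : ¬ Function.Bijective p) :
    ghost (∑ σ : Equiv.Perm (Fin n), eps σ * ∏ i, A i (p i) * B (p i) (σ i)) := by
  obtain ⟨i, j, hpij, hij⟩ : ∃ i j, p i = p j ∧ i ≠ j := by
    rw [← Finite.injective_iff_bijective, Function.Injective] at H
    push_neg at H
    exact H
  refine ghost_sum_pairs Finset.univ _ (fun σ => σ * Equiv.swap i j)
    (fun _ _ => Finset.mem_univ _)
    (fun σ _ => Equiv.mul_swap_involutive i j σ)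
    (fun σ _ => (not_congr Equiv.mul_swap_eq_iff).mpr hij)
    (fun σ _ => ?_)
  have hterm : ∀ τ : Equiv.Perm (Fin n),
      (∏ x, A x (p x) * B (p x) (τ x)) = (∏ x, A x (p x)) * ∏ x, B (p x) (τ x) :=
    fun τ => Finset.prod_mul_distrib
  have hQ : (∏ x, B (p x) ((σ * Equiv.swap i j) x)) = ∏ x, B (p x) (σ x) :=
    Fintype.prod_equiv (Equiv.swap i j) _ _
      (by simp [Equiv.apply_swap_eq_self hpij, Equiv.Perm.mul_apply])
  have hsign : (eps (σ * Equiv.swap i j) : Option (F × L))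
      = some ((0 : F), -(((Equiv.Perm.sign σ : ℤ) : L))) := by
    simp [eps, Equiv.Perm.sign_mul, Equiv.Perm.sign_swap hij]
  rw [hterm, hterm, hQ, hsign]
  exact ghost_pair _ _

set_option maxHeartbeats 2000000 in
lemma bij_sum {n : ℕ} (A B : Matrix (Fin n) (Fin n) (Option (F × L))) :
    ∑ p ∈ Finset.univ.filter (fun p : Fin n → Fin n => Function.Bijective p),
      ∑ σ : Equiv.Perm (Fin n), eps σ * ∏ i, A i (p i) * B (p i) (σ i)
    = eltDet A * eltDet B := by
  rw [det_eq, det_eq, Finset.sum_mul_sum]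
  calc
    (∑ p ∈ Finset.univ.filter (fun p : Fin n → Fin n => Function.Bijective p),
        ∑ σ : Equiv.Perm (Fin n), eps σ * ∏ i, A i (p i) * B (p i) (σ i))
      = ∑ τ : Equiv.Perm (Fin n),
          ∑ σ : Equiv.Perm (Fin n), eps σ * ∏ i, A i (τ i) * B (τ i) (σ i) :=
        Finset.sum_bij (fun p h => Equiv.ofBijective p (Finset.mem_filter.1 h).2)
          (fun _ _ => Finset.mem_univ _)
          (fun _ _ _ _ h => by injection h)
          (fun τ _ => ⟨τ, Finset.mem_filter.2 ⟨Finset.mem_univ _, τ.bijective⟩,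
            Equiv.coe_fn_injective rfl⟩)
          (fun p hp => by
            have hc : ⇑(Equiv.ofBijective p (Finset.mem_filter.1 hp).2) = p := rfl
            rw [hc])
    _ = ∑ τ : Equiv.Perm (Fin n), ∑ ρ : Equiv.Perm (Fin n),
          (eps τ * ∏ i, A i (τ i)) * (eps ρ * ∏ i, B i (ρ i)) := by
        refine Finset.sum_congr rfl fun τ _ => ?_
        refine Fintype.sum_equiv (Equiv.mulRight τ⁻¹) _ _ fun σ => ?_
        simp only [Equiv.coe_mulRight]
        have h1 : (∏ i, A i (τ i) * B (τ i) (σ i))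
            = (∏ i, A i (τ i)) * ∏ i, B (τ i) (σ i) :=
          Finset.prod_mul_distrib
        have h2 : (∏ i, B i ((σ * τ⁻¹) i)) = ∏ i, B (τ i) (σ i) := by
          rw [← Equiv.prod_comp τ (fun i => B i ((σ * τ⁻¹) i))]
          simp [Equiv.Perm.mul_apply]
        have h3 : (eps (σ * τ⁻¹) : Option (F × L)) * eps τ = eps σ := by
          rw [eps_mul, inv_mul_cancel_right]
        rw [h1, h2, ← h3]
        ring

end EltProof

open EltProof in
/-- Multiplicativity of the ELT determinant up to surpassing: det(AB) ⊨ det(A)det(B). -/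
theorem eltDet_mul_surpass {F L : Type*} [AddCommGroup F] [LinearOrder F] [IsOrderedAddMonoid F] [CommRing L]
    {n : ℕ} (A B : Matrix (Fin n) (Fin n) (Option (F × L))) :
    eSurp (eltDet (eMatMul A B)) (eMul (eltDet A) (eltDet B)) := by
  classical
  have h1 : eltDet (eMatMul A B)
      = ∑ p : Fin n → Fin n, ∑ σ : Equiv.Perm (Fin n),
          eps σ * ∏ i, A i (p i) * B (p i) (σ i) := by
    rw [det_eq]
    have hprod : ∀ σ : Equiv.Perm (Fin n),
        (∏ i, (eMatMul A B) i (σ i))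
          = ∑ p : Fin n → Fin n, ∏ i, A i (p i) * B (p i) (σ i) := by
      intro σ
      calc (∏ i, (eMatMul A B) i (σ i)) = ∏ i, ∑ k, A i k * B k (σ i) := by
            refine Finset.prod_congr rfl fun i _ => ?_
            show eSumF _ = _
            rw [eSumF_eq]
            rfl
        _ = ∑ p ∈ Fintype.piFinset (fun _ : Fin n => (Finset.univ : Finset (Fin n))),
              ∏ i, A i (p i) * B (p i) (σ i) := by
            rw [Finset.prod_univ_sum]
        _ = ∑ p : Fin n → Fin n, ∏ i, A i (p i) * B (p i) (σ i) := by
            rw [Fintype.piFinset_univ]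
    simp_rw [hprod, Finset.mul_sum]
    rw [Finset.sum_comm]
  refine ⟨∑ p ∈ Finset.univ.filter (fun p : Fin n → Fin n => ¬ Function.Bijective p),
      ∑ σ : Equiv.Perm (Fin n), eps σ * ∏ i, A i (p i) * B (p i) (σ i), ?_, ?_⟩
  · exact ghost_sum _ _ fun p hp =>
      nonbij_ghost A B p (Finset.mem_filter.1 hp).2
  · show eltDet (eMatMul A B) = _ + _
    rw [h1, ← Finset.sum_filter_add_sum_filter_not Finset.univ
      (fun p : Fin n → Fin n => Function.Bijective p), bij_sum]
    rfl
end

section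
/- If A, B are n×n matrices over a commutative ELT ring and s(det(AB)) ≠ 0, then det(AB) = det(A)·det(B). -/
namespace EltAux

variable {F L : Type*} [AddCommGroup F] [LinearOrder F] [IsOrderedAddMonoid F] [CommRing L]

lemma eltAdd_of_gt {x y : F × L} (h : y.1 < x.1) : eltAdd x y = x := by
  simp [eltAdd, h]

lemma eltAdd_of_lt {x y : F × L} (h : x.1 < y.1) : eltAdd x y = y := by
  simp [eltAdd, h, not_lt.2 h.le]

lemma eltAdd_of_eq {x y : F × L} (h : x.1 = y.1) : eltAdd x y = (x.1, x.2 + y.2) := by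
  simp [eltAdd, h, lt_irrefl]

lemma eltAdd_same_fst (v : F) (c d : L) : eltAdd (v, c) (v, d) = (v, c + d) :=
  eltAdd_of_eq rfl

lemma eltAdd_comm (x y : F × L) : eltAdd x y = eltAdd y x := by
  rcases lt_trichotomy x.1 y.1 with h | h | h
  · rw [eltAdd_of_lt h, eltAdd_of_gt h]
  · rw [eltAdd_of_eq h, eltAdd_of_eq h.symm, h, add_comm]
  · rw [eltAdd_of_gt h, eltAdd_of_lt h]

lemma eltAdd_assoc (x y z : F × L) : eltAdd (eltAdd x y) z = eltAdd x (eltAdd y z) := by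
  rcases lt_trichotomy x.1 y.1 with h | h | h <;>
    rcases lt_trichotomy y.1 z.1 with h' | h' | h'
  · conv_lhs => rw [eltAdd_of_lt h, eltAdd_of_lt h']
    conv_rhs => rw [eltAdd_of_lt h', eltAdd_of_lt (h.trans h')]
  · conv_lhs => rw [eltAdd_of_lt h, eltAdd_of_eq h']
    conv_rhs => rw [eltAdd_of_eq h', eltAdd_of_lt (show x.1 < ((y.1, y.2 + z.2) : F × L).1 from h)]
  · conv_lhs => rw [eltAdd_of_lt h, eltAdd_of_gt h']
    conv_rhs => rw [eltAdd_of_gt h', eltAdd_of_lt h]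
  · conv_lhs => rw [eltAdd_of_eq h,
      eltAdd_of_lt (show ((x.1, x.2 + y.2) : F × L).1 < z.1 from h ▸ h')]
    conv_rhs => rw [eltAdd_of_lt h', eltAdd_of_lt (show x.1 < z.1 from h ▸ h')]
  · conv_lhs => rw [eltAdd_of_eq h,
      eltAdd_of_eq (show ((x.1, x.2 + y.2) : F × L).1 = z.1 from h.trans h')]
    conv_rhs => rw [eltAdd_of_eq h',
      eltAdd_of_eq (show x.1 = ((y.1, y.2 + z.2) : F × L).1 from h)]
    simp [add_assoc]
  · conv_lhs => rw [eltAdd_of_eq h,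
      eltAdd_of_gt (show z.1 < ((x.1, x.2 + y.2) : F × L).1 from h ▸ h')]
    conv_rhs => rw [eltAdd_of_gt h', eltAdd_of_eq h]
  · rcases lt_trichotomy x.1 z.1 with h'' | h'' | h''
    · conv_lhs => rw [eltAdd_of_gt h, eltAdd_of_lt h'']
      conv_rhs => rw [eltAdd_of_lt h', eltAdd_of_lt h'']
    · conv_lhs => rw [eltAdd_of_gt h, eltAdd_of_eq h'']
      conv_rhs => rw [eltAdd_of_lt h', eltAdd_of_eq h'']
    · conv_lhs => rw [eltAdd_of_gt h, eltAdd_of_gt h'']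
      conv_rhs => rw [eltAdd_of_lt h', eltAdd_of_gt h'']
  · conv_lhs => rw [eltAdd_of_gt h, eltAdd_of_gt (show z.1 < x.1 from h' ▸ h)]
    conv_rhs => rw [eltAdd_of_eq h',
      eltAdd_of_gt (show ((y.1, y.2 + z.2) : F × L).1 < x.1 from h)]
  · conv_lhs => rw [eltAdd_of_gt h, eltAdd_of_gt ((h'.trans h))]
    conv_rhs => rw [eltAdd_of_gt h', eltAdd_of_gt h]

lemma eAdd_assoc (a b c : Option (F × L)) : eAdd (eAdd a b) c = eAdd a (eAdd b c) := by
  cases a <;> cases b <;> cases c <;> simp only [eAdd] <;> rw [eltAdd_assoc]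

lemma eAdd_comm (a b : Option (F × L)) : eAdd a b = eAdd b a := by
  cases a <;> cases b <;> simp only [eAdd] <;> rw [eltAdd_comm]

lemma eMul_assoc (a b c : Option (F × L)) : eMul (eMul a b) c = eMul a (eMul b c) := by
  cases a <;> cases b <;> cases c <;> simp [eMul, eltMul, add_assoc, mul_assoc]

lemma eMul_comm (a b : Option (F × L)) : eMul a b = eMul b a := by
  cases a <;> cases b <;> simp [eMul, eltMul, add_comm, mul_comm]

lemma eDistrib (a b c : Option (F × L)) :
    eMul a (eAdd b c) = eAdd (eMul a b) (eMul a c) := by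
  cases a with
  | none => cases b <;> cases c <;> rfl
  | some a =>
    cases b with
    | none => cases c <;> rfl
    | some b =>
      cases c with
      | none => rfl
      | some c =>
        show some (eltMul a (eltAdd b c)) = some (eltAdd (eltMul a b) (eltMul a c))
        rcases lt_trichotomy b.1 c.1 with h | h | h
        · rw [eltAdd_of_lt h, eltAdd_of_lt (show (eltMul a b).1 < (eltMul a c).1 from
            add_lt_add_right h a.1)]
        · rw [eltAdd_of_eq h, eltAdd_of_eq (show (eltMul a b).1 = (eltMul a c).1 by
            show a.1 + b.1 = a.1 + c.1; rw [h])]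
          show some (a.1 + b.1, a.2 * (b.2 + c.2)) = some (a.1 + b.1, a.2 * b.2 + a.2 * c.2)
          rw [mul_add]
        · rw [eltAdd_of_gt h, eltAdd_of_gt (show (eltMul a c).1 < (eltMul a b).1 from
            add_lt_add_right h a.1)]

instance : Add (Option (F × L)) := ⟨eAdd⟩
instance : Zero (Option (F × L)) := ⟨none⟩
instance : Mul (Option (F × L)) := ⟨eMul⟩
instance : One (Option (F × L)) := ⟨some ((0 : F), (1 : L))⟩

instance : CommSemiring (Option (F × L)) where
  add_assoc := eAdd_assoc
  zero_add a := by cases a <;> rfl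
  add_zero a := by cases a <;> rfl
  add_comm := eAdd_comm
  nsmul := nsmulRec
  npow := npowRec
  mul_assoc := eMul_assoc
  one_mul a := by
    show eMul (some ((0 : F), (1 : L))) a = a
    cases a <;> simp [eMul, eltMul]
  mul_one a := by
    show eMul a (some ((0 : F), (1 : L))) = a
    cases a <;> simp [eMul, eltMul]
  mul_comm := eMul_comm
  zero_mul a := by cases a <;> rfl
  mul_zero a := by cases a <;> rfl
  left_distrib := eDistrib
  right_distrib a b c := by
    show eMul (eAdd a b) c = eAdd (eMul a c) (eMul b c)
    rw [eMul_comm, eDistrib, eMul_comm c a, eMul_comm c b]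

lemma add_def (x y : Option (F × L)) : x + y = eAdd x y := rfl
lemma mul_def (x y : Option (F × L)) : x * y = eMul x y := rfl
lemma zero_def : (0 : Option (F × L)) = none := rfl
lemma one_def : (1 : Option (F × L)) = some ((0 : F), (1 : L)) := rfl

lemma eSumF_eq {α : Type*} [Fintype α] (f : α → Option (F × L)) :
    eSumF f = ∑ a, f a := by
  rw [eSumF, ← Finset.sum_map_toList, List.sum_eq_foldr]
  rfl

lemma eProd_eq {k : ℕ} (f : Fin k → Option (F × L)) :
    eProd f = ∏ i, f i := by
  rw [eProd, ← List.prod_ofFn, List.prod_eq_foldr]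
  rfl

/-- the sign of a permutation as a layer element -/
def eps {n : ℕ} (σ : Equiv.Perm (Fin n)) : Option (F × L) :=
  some ((0 : F), ((Equiv.Perm.sign σ : ℤ) : L))

lemma eltDet_eq {n : ℕ} (A : Matrix (Fin n) (Fin n) (Option (F × L))) :
    eltDet A = ∑ σ : Equiv.Perm (Fin n), eps σ * ∏ i, A i (σ i) := by
  rw [eltDet, eSumF_eq]
  refine Finset.sum_congr rfl fun σ _ => ?_
  rw [mul_def, eProd_eq]
  rfl

lemma eMatMul_eq {n : ℕ} (A B : Matrix (Fin n) (Fin n) (Option (F × L))) (i j : Fin n) :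
    eMatMul A B i j = ∑ k, A i k * B k j := by
  rw [eMatMul, eSumF_eq]; rfl

/-- Ghost elements: layer zero. -/
def Ghost (x : Option (F × L)) : Prop := sBar x = 0

lemma ghost_zero : Ghost (0 : Option (F × L)) := rfl

lemma ghost_add {x y : Option (F × L)} (hx : Ghost x) (hy : Ghost y) : Ghost (x + y) := by
  cases x with
  | none => exact hy
  | some a =>
    cases y with
    | none => exact hx
    | some b =>
      simp only [Ghost, sBar, Option.map_some, Option.getD_some] at hx hy ⊢
      show ((eltAdd a b).2 : L) = 0
      rcases lt_trichotomy a.1 b.1 with h | h | h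
      · rw [eltAdd_of_lt h]; exact hy
      · rw [eltAdd_of_eq h]; show a.2 + b.2 = 0; rw [hx, hy, add_zero]
      · rw [eltAdd_of_gt h]; exact hx

lemma ghost_mul_right {x : Option (F × L)} (hx : Ghost x) (y : Option (F × L)) :
    Ghost (x * y) := by
  cases x with
  | none => cases y <;> exact ghost_zero
  | some a =>
    cases y with
    | none => exact ghost_zero
    | some b =>
      simp only [Ghost, sBar, Option.map_some, Option.getD_some] at hx ⊢
      show a.2 * b.2 = 0
      rw [hx, zero_mul]

lemma ghost_sum {α : Type*} (s : Finset α) (f : α → Option (F × L))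
    (h : ∀ a ∈ s, Ghost (f a)) : Ghost (∑ a ∈ s, f a) := by
  classical
  induction s using Finset.induction_on with
  | empty => simpa using ghost_zero
  | insert _ _ hnotmem ih =>
    rw [Finset.sum_insert hnotmem]
    exact ghost_add (h _ (Finset.mem_insert_self _ _))
      (ih fun a ha => h a (Finset.mem_insert_of_mem ha))


lemma eps_mul {n : ℕ} (σ τ : Equiv.Perm (Fin n)) :
    (eps (σ * τ) : Option (F × L)) = eps σ * eps τ := by
  show some ((0 : F), ((Equiv.Perm.sign (σ * τ) : ℤ) : L)) = some (eltMul _ _)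
  have hc : ((Equiv.Perm.sign (σ * τ) : ℤ) : L)
      = ((Equiv.Perm.sign σ : ℤ) : L) * ((Equiv.Perm.sign τ : ℤ) : L) := by
    rw [Equiv.Perm.sign_mul]
    push_cast
    ring
  show some ((0 : F), ((Equiv.Perm.sign (σ * τ) : ℤ) : L))
    = some ((0 : F) + 0, ((Equiv.Perm.sign σ : ℤ) : L) * ((Equiv.Perm.sign τ : ℤ) : L))
  rw [hc, add_zero]

lemma ghost_eps_add_eps_swap {n : ℕ} (σ : Equiv.Perm (Fin n)) {i j : Fin n} (hij : i ≠ j) :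
    Ghost ((eps σ : Option (F × L)) + eps (σ * Equiv.swap i j)) := by
  have hsign : ((Equiv.Perm.sign (σ * Equiv.swap i j) : ℤ) : L)
      = -((Equiv.Perm.sign σ : ℤ) : L) := by
    rw [Equiv.Perm.sign_mul, Equiv.Perm.sign_swap hij]
    push_cast
    ring
  show Ghost (eAdd (eps σ) (eps (σ * Equiv.swap i j)))
  rw [eps, eps, hsign]
  show Ghost (some (eltAdd ((0:F), ((Equiv.Perm.sign σ : ℤ) : L))
    ((0:F), -((Equiv.Perm.sign σ : ℤ) : L))))
  rw [eltAdd_same_fst]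
  show ((Equiv.Perm.sign σ : ℤ) : L) + -((Equiv.Perm.sign σ : ℤ) : L) = 0
  ring

lemma ghost_det_aux {n : ℕ} (A B : Matrix (Fin n) (Fin n) (Option (F × L)))
    (p : Fin n → Fin n) (hp : ¬ Function.Bijective p) :
    Ghost (∑ σ : Equiv.Perm (Fin n), eps σ * ∏ x, A x (p x) * B (p x) (σ x)) := by
  classical
  obtain ⟨i, j, hpij, hij⟩ : ∃ i j, p i = p j ∧ i ≠ j := by
    rw [← Finite.injective_iff_bijective, Function.Injective] at hp
    push_neg at hp
    exact hp
  set t : Equiv.Perm (Fin n) → Option (F × L) :=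
    fun σ => eps σ * ∏ x, A x (p x) * B (p x) (σ x) with ht
  have key : ∀ σ : Equiv.Perm (Fin n), Ghost (t σ + t (σ * Equiv.swap i j)) := by
    intro σ
    have hBprod : (∏ x, B (p x) ((σ * Equiv.swap i j) x)) = ∏ x, B (p x) (σ x) := by
      apply Fintype.prod_equiv (Equiv.swap i j)
      intro x
      show B (p x) (σ (Equiv.swap i j x)) = B (p (Equiv.swap i j x)) (σ (Equiv.swap i j x))
      rw [Equiv.apply_swap_eq_self hpij]
    have hthis : t σ + t (σ * Equiv.swap i j)
        = (eps σ + eps (σ * Equiv.swap i j)) * ((∏ x, A x (p x)) * ∏ x, B (p x) (σ x)) := by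
      rw [ht]
      simp only [Finset.prod_mul_distrib, Equiv.Perm.coe_mul, Function.comp_apply]
      rw [show (∏ x, B (p x) (σ ((Equiv.swap i j) x))) = ∏ x, B (p x) (σ x) from hBprod]
      ring
    rw [hthis]
    exact ghost_mul_right (ghost_eps_add_eps_swap σ hij) _
  have hpart : (∑ σ : Equiv.Perm (Fin n), t σ)
      = ∑ σ ∈ Finset.univ.filter (fun σ : Equiv.Perm (Fin n) => σ i < σ j),
          (t σ + t (σ * Equiv.swap i j)) := by
    rw [Finset.sum_add_distrib,
      ← Finset.sum_filter_add_sum_filter_not Finset.univ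
        (fun σ : Equiv.Perm (Fin n) => σ i < σ j) t]
    congr 1
    refine Finset.sum_bij' (fun σ _ => σ * Equiv.swap i j) (fun σ _ => σ * Equiv.swap i j)
      ?_ ?_ ?_ ?_ ?_
    · intro σ hσ
      simp only [Finset.mem_filter, Finset.mem_univ, true_and] at hσ ⊢
      have h1 : (σ * Equiv.swap i j) i = σ j := by
        simp [Equiv.Perm.mul_apply, Equiv.swap_apply_left]
      have h2 : (σ * Equiv.swap i j) j = σ i := by
        simp [Equiv.Perm.mul_apply, Equiv.swap_apply_right]
      rw [h1, h2]
      have hne : σ j ≠ σ i := (σ.injective.ne hij).symm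
      exact lt_of_le_of_ne (not_lt.1 hσ) hne
    · intro σ hσ
      simp only [Finset.mem_filter, Finset.mem_univ, true_and] at hσ ⊢
      have h1 : (σ * Equiv.swap i j) i = σ j := by
        simp [Equiv.Perm.mul_apply, Equiv.swap_apply_left]
      have h2 : (σ * Equiv.swap i j) j = σ i := by
        simp [Equiv.Perm.mul_apply, Equiv.swap_apply_right]
      rw [h1, h2]
      exact not_lt.2 (le_of_lt hσ)
    · intro σ _
      show σ * Equiv.swap i j * Equiv.swap i j = σ
      rw [mul_assoc, Equiv.swap_mul_self, mul_one]
    · intro σ _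
      show σ * Equiv.swap i j * Equiv.swap i j = σ
      rw [mul_assoc, Equiv.swap_mul_self, mul_one]
    · intro σ _
      show t σ = t (σ * Equiv.swap i j * Equiv.swap i j)
      rw [mul_assoc, Equiv.swap_mul_self, mul_one]
  rw [hpart]
  exact ghost_sum _ _ fun σ _ => key σ

lemma bij_sum_eq {n : ℕ} (A B : Matrix (Fin n) (Fin n) (Option (F × L))) :
    (∑ p ∈ Finset.univ.filter (fun p : Fin n → Fin n => Function.Bijective p),
        ∑ σ : Equiv.Perm (Fin n), eps σ * ∏ x, A x (p x) * B (p x) (σ x))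
      = eltDet A * eltDet B := by
  classical
  have e1 : (∑ p ∈ Finset.univ.filter (fun p : Fin n → Fin n => Function.Bijective p),
        ∑ σ : Equiv.Perm (Fin n), eps σ * ∏ x, A x (p x) * B (p x) (σ x))
      = ∑ τ : Equiv.Perm (Fin n),
          ∑ σ : Equiv.Perm (Fin n), eps σ * ∏ x, A x (τ x) * B (τ x) (σ x) :=
    Finset.sum_bij (fun p h => Equiv.ofBijective p (Finset.mem_filter.1 h).2)
      (fun _ _ => Finset.mem_univ _)
      (fun _ _ _ _ hpq => by injection hpq)
      (fun b _ => ⟨b, Finset.mem_filter.2 ⟨Finset.mem_univ _, b.bijective⟩,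
        Equiv.coe_fn_injective rfl⟩)
      (fun _ _ => rfl)
  rw [e1]
  have e2 : ∀ τ : Equiv.Perm (Fin n),
      (∑ σ : Equiv.Perm (Fin n), eps σ * ∏ x, A x (τ x) * B (τ x) (σ x))
        = (eps τ * ∏ x, A x (τ x)) * ∑ ρ : Equiv.Perm (Fin n), eps ρ * ∏ x, B x (ρ x) := by
    intro τ
    rw [Finset.mul_sum]
    refine (Fintype.sum_equiv (Equiv.mulRight τ)
      (fun ρ => (eps τ * ∏ x, A x (τ x)) * (eps ρ * ∏ x, B x (ρ x)))
      (fun σ => eps σ * ∏ x, A x (τ x) * B (τ x) (σ x)) ?_).symm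
    intro ρ
    show (eps τ * ∏ x, A x (τ x)) * (eps ρ * ∏ x, B x (ρ x))
      = eps (ρ * τ) * ∏ x, A x (τ x) * B (τ x) ((ρ * τ) x)
    have hB : (∏ x, B (τ x) ((ρ * τ) x)) = ∏ x, B x (ρ x) := by
      have := Equiv.prod_comp τ (fun y => B y (ρ y))
      simpa [Equiv.Perm.mul_apply] using this
    rw [Finset.prod_mul_distrib, eps_mul]
    rw [show (∏ x, B (τ x) ((ρ * τ) x)) = ∏ x, B x (ρ x) from hB]
    ring
  simp only [e2]
  rw [← Finset.sum_mul, eltDet_eq, eltDet_eq]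

lemma eq_of_add_ghost {x y g : Option (F × L)} (hx : x = y + g) (hg : Ghost g)
    (h : sBar x ≠ 0) : x = y := by
  subst hx
  cases y with
  | none =>
    cases g with
    | none => rfl
    | some b => exact absurd hg h
  | some a =>
    cases g with
    | none => rfl
    | some b =>
      show some (eltAdd a b) = some a
      have hb : b.2 = 0 := hg
      rcases lt_trichotomy a.1 b.1 with hlt | heq | hgt
      · exfalso
        apply h
        show sBar (some (eltAdd a b)) = 0
        rw [eltAdd_of_lt hlt]
        exact hb
      · rw [eltAdd_of_eq heq]
        show some (a.1, a.2 + b.2) = some a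
        rw [hb, add_zero]
      · rw [eltAdd_of_gt hgt]

end EltAux

open Finset Equiv Equiv.Perm EltAux in
/-- If s(det(AB)) ≠ 0 then det(AB) = det(A)·det(B). -/
theorem eltDet_mul_of_nonzero_layer {F L : Type*} [AddCommGroup F] [LinearOrder F] [IsOrderedAddMonoid F]
    [CommRing L] {n : ℕ} (A B : Matrix (Fin n) (Fin n) (Option (F × L)))
    (h : sBar (eltDet (eMatMul A B)) ≠ 0) :
    eltDet (eMatMul A B) = eMul (eltDet A) (eltDet B) := by
  classical
  have expand : eltDet (eMatMul A B)
      = ∑ p : Fin n → Fin n, ∑ σ : Equiv.Perm (Fin n),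
          eps σ * ∏ x, A x (p x) * B (p x) (σ x) := by
    rw [eltDet_eq]
    simp only [eMatMul_eq, Finset.prod_univ_sum, Fintype.piFinset_univ, Finset.mul_sum]
    rw [Finset.sum_comm]
  have split := (Finset.sum_filter_add_sum_filter_not Finset.univ
    (fun p : Fin n → Fin n => Function.Bijective p)
    (fun p => ∑ σ : Equiv.Perm (Fin n), eps σ * ∏ x, A x (p x) * B (p x) (σ x))).symm
  have main : eltDet (eMatMul A B) = eltDet A * eltDet B
      + ∑ p ∈ Finset.univ.filter (fun p : Fin n → Fin n => ¬ Function.Bijective p),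
          ∑ σ : Equiv.Perm (Fin n), eps σ * ∏ x, A x (p x) * B (p x) (σ x) := by
    rw [expand, split, bij_sum_eq]
  have hghost : Ghost (∑ p ∈ Finset.univ.filter
      (fun p : Fin n → Fin n => ¬ Function.Bijective p),
        ∑ σ : Equiv.Perm (Fin n), eps σ * ∏ x, A x (p x) * B (p x) (σ x)) :=
    ghost_sum _ _ fun p hp =>
      ghost_det_aux A B p (Finset.mem_filter.1 hp).2
  exact eq_of_add_ghost main hghost h
end

section
/- If A ∈ R̄^{n×n} has det(A) invertible in R, then the columns of A are linearly independent: the only vector v ∈ (R^× ∪ {−∞})^n with all entries of Av of layer zero is v = (−∞,…,−∞). -/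
namespace ELTAux

variable {F L : Type*} [AddCommGroup F] [LinearOrder F] [IsOrderedAddMonoid F] [CommRing L]

theorem eltAdd_lt {x y : F × L} (h : x.1 < y.1) : eltAdd x y = y := by
  rw [eltAdd, if_neg (not_lt_of_gt h), if_pos h]

theorem eltAdd_gt {x y : F × L} (h : y.1 < x.1) : eltAdd x y = x := by
  rw [eltAdd, if_pos h]

theorem eltAdd_tie {x y : F × L} (h : x.1 = y.1) : eltAdd x y = (x.1, x.2 + y.2) := by
  rw [eltAdd, if_neg (by rw [h]; exact lt_irrefl _), if_neg (by rw [h]; exact lt_irrefl _)]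

theorem eltAdd_assoc (a b c : F × L) : eltAdd (eltAdd a b) c = eltAdd a (eltAdd b c) := by
  rcases lt_trichotomy a.1 b.1 with h1 | h1 | h1 <;>
    rcases lt_trichotomy b.1 c.1 with h2 | h2 | h2
  · rw [eltAdd_lt h1, eltAdd_lt h2, eltAdd_lt (h1.trans h2)]
  · rw [eltAdd_lt h1, eltAdd_tie h2, eltAdd_lt (show a.1 < (b.1, b.2 + c.2).1 from h1)]
  · rw [eltAdd_lt h1, eltAdd_gt h2, eltAdd_lt h1]
  · rw [eltAdd_tie h1, eltAdd_lt h2,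
      eltAdd_lt (show (a.1, a.2 + b.2).1 < c.1 from h1 ▸ h2), eltAdd_lt (h1 ▸ h2)]
  · rw [eltAdd_tie h1, eltAdd_tie h2, eltAdd_tie (show (a.1, a.2 + b.2).1 = c.1 from h1.trans h2),
      eltAdd_tie (show a.1 = (b.1, b.2 + c.2).1 from h1)]
    simp [add_assoc, h1, h2]
  · rw [eltAdd_tie h1, eltAdd_gt h2, eltAdd_gt (show c.1 < (a.1, a.2 + b.2).1 from h1 ▸ h2),
      eltAdd_tie h1]
  · rw [eltAdd_gt h1, eltAdd_lt h2]
  · rw [eltAdd_gt h1, eltAdd_tie h2, eltAdd_gt (show c.1 < a.1 from h2 ▸ h1),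
      eltAdd_gt (show (b.1, b.2 + c.2).1 < a.1 from h1)]
  · rw [eltAdd_gt h1, eltAdd_gt h2, eltAdd_gt (h2.trans h1), eltAdd_gt h1]

instance instACM : AddCommMonoid (Option (F × L)) where
  add := eAdd
  zero := none
  add_assoc x y z := by
    cases x with
    | none => rfl
    | some a =>
      cases y with
      | none => rfl
      | some b =>
        cases z with
        | none => rfl
        | some c => exact congrArg some (eltAdd_assoc a b c)
  zero_add x := by cases x <;> rfl
  add_zero x := by cases x <;> rfl
  add_comm x y := by
    cases x with
    | none => cases y <;> rfl
    | some a =>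
      cases y with
      | none => rfl
      | some b =>
        show some (eltAdd a b) = some (eltAdd b a)
        rcases lt_trichotomy a.1 b.1 with h | h | h
        · rw [eltAdd_lt h, eltAdd_gt h]
        · rw [eltAdd_tie h, eltAdd_tie h.symm, h, add_comm a.2 b.2]
        · rw [eltAdd_gt h, eltAdd_lt h]
  nsmul := letI : Zero (Option (F × L)) := ⟨none⟩; letI : Add (Option (F × L)) := ⟨eAdd⟩; nsmulRec
  nsmul_zero := fun _ => rfl
  nsmul_succ := fun _ _ => rfl

instance instSemi : CommSemiring (Option (F × L)) where
  __ := (instACM : AddCommMonoid (Option (F × L)))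
  mul := eMul
  one := some ((0 : F), (1 : L))
  npow := letI : One (Option (F × L)) := ⟨some ((0 : F), (1 : L))⟩; letI : Mul (Option (F × L)) := ⟨eMul⟩; npowRec
  npow_zero := fun _ => rfl
  npow_succ := fun _ _ => rfl
  mul_assoc x y z := by
    cases x <;> cases y <;> cases z <;> try rfl
    show some (eltMul (eltMul _ _) _) = some (eltMul _ (eltMul _ _))
    unfold eltMul
    simp [add_assoc, mul_assoc]
  one_mul x := by
    cases x with
    | none => rfl
    | some a => show some (eltMul _ a) = some a; simp [eltMul]
  mul_one x := by
    cases x with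
    | none => rfl
    | some a => show some (eltMul a _) = some a; simp [eltMul]
  zero_mul x := by cases x <;> rfl
  mul_zero x := by cases x <;> rfl
  mul_comm x y := by
    cases x <;> cases y <;> try rfl
    show some (eltMul _ _) = some (eltMul _ _)
    unfold eltMul
    simp [add_comm, mul_comm]
  left_distrib x y z := by
    cases x with
    | none => cases y <;> cases z <;> rfl
    | some a =>
      cases y with
      | none => cases z <;> rfl
      | some b =>
        cases z with
        | none => rfl
        | some c =>
          show some (eltMul a (eltAdd b c)) = some (eltAdd (eltMul a b) (eltMul a c))
          rcases lt_trichotomy b.1 c.1 with h | h | h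
          · rw [eltAdd_lt h, eltAdd_lt (show (eltMul a b).1 < (eltMul a c).1 from
              add_lt_add_right h _)]
          · rw [eltAdd_tie h, eltAdd_tie (show (eltMul a b).1 = (eltMul a c).1 by
              show a.1 + b.1 = a.1 + c.1; rw [h])]
            show some (a.1 + b.1, a.2 * (b.2 + c.2)) = _
            rw [mul_add]; rfl
          · rw [eltAdd_gt h, eltAdd_gt (show (eltMul a c).1 < (eltMul a b).1 from
              add_lt_add_right h _)]
  right_distrib x y z := by
    cases x with
    | none =>
      cases y with
      | none => cases z <;> rfl
      | some b => cases z <;> rfl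
    | some a =>
      cases y with
      | none => cases z <;> rfl
      | some b =>
        cases z with
        | none => rfl
        | some c =>
          show some (eltMul (eltAdd a b) c) = some (eltAdd (eltMul a c) (eltMul b c))
          rcases lt_trichotomy a.1 b.1 with h | h | h
          · rw [eltAdd_lt h, eltAdd_lt (show (eltMul a c).1 < (eltMul b c).1 from
              add_lt_add_left h _)]
          · rw [eltAdd_tie h, eltAdd_tie (show (eltMul a c).1 = (eltMul b c).1 by
              show a.1 + c.1 = b.1 + c.1; rw [h])]
            show some (a.1 + c.1, (a.2 + b.2) * c.2) = _
            rw [add_mul]; rfl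
          · rw [eltAdd_gt h, eltAdd_gt (show (eltMul b c).1 < (eltMul a c).1 from
              add_lt_add_left h _)]

theorem add_def (x y : Option (F × L)) : x + y = eAdd x y := rfl
theorem mul_def (x y : Option (F × L)) : x * y = eMul x y := rfl
theorem zero_def : (0 : Option (F × L)) = none := rfl
theorem one_def : (1 : Option (F × L)) = some ((0 : F), (1 : L)) := rfl
theorem some_mul_some (a b : F × L) : (some a : Option (F × L)) * some b = some (eltMul a b) := rfl

end ELTAux
namespace ELTAux

variable {F L : Type*} [AddCommGroup F] [LinearOrder F] [IsOrderedAddMonoid F] [CommRing L]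

theorem eSumF_eq_sum {α : Type*} [Fintype α] (f : α → Option (F × L)) :
    eSumF f = ∑ a, f a := by
  show ((Finset.univ : Finset α).toList.map f).foldr (· + ·) 0 = _
  rw [← List.sum_eq_foldr, Finset.sum_map_toList]

theorem eProd_eq_prod {k : ℕ} (f : Fin k → Option (F × L)) :
    eProd f = ∏ i, f i := by
  show (List.ofFn f).foldr (· * ·) 1 = _
  rw [← List.prod_eq_foldr, Fin.prod_ofFn]

theorem sBar_none : sBar (none : Option (F × L)) = 0 := rfl
theorem sBar_zero : sBar (0 : Option (F × L)) = 0 := rfl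
theorem sBar_some (a : F × L) : sBar (some a) = a.2 := rfl

theorem sBar_mul_right (x y : Option (F × L)) (h : sBar y = 0) : sBar (x * y) = 0 := by
  cases x <;> cases y <;> simp_all [mul_def, eMul, sBar, eltMul]

theorem sBar_mul_left (x y : Option (F × L)) (h : sBar x = 0) : sBar (x * y) = 0 := by
  cases x <;> cases y <;> simp_all [mul_def, eMul, sBar, eltMul]

theorem sBar_add (x y : Option (F × L)) (hx : sBar x = 0) (hy : sBar y = 0) :
    sBar (x + y) = 0 := by
  cases x with
  | none => exact hy
  | some a =>
    cases y with
    | none => exact hx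
    | some b =>
      show sBar (some (eltAdd a b)) = 0
      rcases lt_trichotomy a.1 b.1 with h | h | h
      · rw [eltAdd_lt h]; exact hy
      · rw [eltAdd_tie h, sBar_some]
        simp only [sBar_some] at hx hy
        simp [hx, hy]
      · rw [eltAdd_gt h]; exact hx

theorem sBar_finsum {α : Type*} (s : Finset α) (f : α → Option (F × L))
    (h : ∀ a ∈ s, sBar (f a) = 0) : sBar (∑ a ∈ s, f a) = 0 :=
  Finset.sum_induction f (fun x => sBar x = 0) (fun a b ha hb => sBar_add a b ha hb) sBar_zero h

/-- tangible part -/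
def tfst (x : Option (F × L)) : WithBot F :=
  match x with
  | none => ⊥
  | some w => (w.1 : WithBot F)

theorem tfst_none : tfst (none : Option (F × L)) = ⊥ := rfl
theorem tfst_zero : tfst (0 : Option (F × L)) = ⊥ := rfl
theorem tfst_one : tfst (1 : Option (F × L)) = ((0 : F) : WithBot F) := rfl
theorem tfst_some (a : F × L) : tfst (some a) = (a.1 : WithBot F) := rfl

theorem tfst_eq_bot_iff {x : Option (F × L)} : tfst x = ⊥ ↔ x = none := by
  cases x <;> simp [tfst]

theorem tfst_add (x y : Option (F × L)) : tfst (x + y) = max (tfst x) (tfst y) := by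
  cases x with
  | none => show tfst y = _ ; simp [tfst_none]
  | some a =>
    cases y with
    | none => show tfst (some a) = _ ; simp [tfst_none]
    | some b =>
      show tfst (some (eltAdd a b)) = _
      rcases lt_trichotomy a.1 b.1 with h | h | h
      · rw [eltAdd_lt h, tfst_some, tfst_some, max_eq_right (le_of_lt (WithBot.coe_lt_coe.2 h))]
      · rw [eltAdd_tie h, tfst_some, tfst_some, tfst_some, h, max_self]
      · rw [eltAdd_gt h, tfst_some, tfst_some, max_eq_left (le_of_lt (WithBot.coe_lt_coe.2 h))]

theorem tfst_mul (x y : Option (F × L)) : tfst (x * y) = tfst x + tfst y := by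
  cases x <;> cases y <;> simp [mul_def, eMul, tfst, eltMul]

theorem tfst_finsum {α : Type*} (s : Finset α) (f : α → Option (F × L)) :
    tfst (∑ a ∈ s, f a) = s.sup fun a => tfst (f a) := by
  classical
  induction s using Finset.induction_on with
  | empty => simp [tfst_zero]
  | insert _ _ hni ih =>
    rw [Finset.sum_insert hni, Finset.sup_insert, tfst_add, ← ih]

theorem tfst_finprod {α : Type*} (s : Finset α) (f : α → Option (F × L)) :
    tfst (∏ a ∈ s, f a) = ∑ a ∈ s, tfst (f a) := by
  classical
  induction s using Finset.induction_on with
  | empty => simp [tfst_one]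
  | insert _ _ hni ih => rw [Finset.prod_insert hni, Finset.sum_insert hni, tfst_mul, ih]

theorem wb_sum_ne_bot {α : Type*} {s : Finset α} {f : α → WithBot F}
    (h : (∑ a ∈ s, f a) ≠ ⊥) {a : α} (ha : a ∈ s) : f a ≠ ⊥ := by
  classical
  intro hb
  apply h
  rw [← Finset.add_sum_erase _ _ ha, hb, WithBot.bot_add]

theorem wb_coe_sum {α : Type*} (s : Finset α) (g : α → F) :
    ((∑ a ∈ s, g a : F) : WithBot F) = ∑ a ∈ s, (g a : WithBot F) := by
  classical
  induction s using Finset.induction_on with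
  | empty => simp
  | insert _ _ hni ih => rw [Finset.sum_insert hni, Finset.sum_insert hni, WithBot.coe_add, ih]

theorem wb_add_le_add_right {x y : WithBot F} (c : F)
    (h : x + (c : WithBot F) ≤ y + (c : WithBot F)) : x ≤ y := by
  cases x with
  | bot => exact bot_le
  | coe a =>
    cases y with
    | bot =>
      simp at h
    | coe b =>
      rw [← WithBot.coe_add, ← WithBot.coe_add, WithBot.coe_le_coe] at h
      exact WithBot.coe_le_coe.2 (le_of_add_le_add_right h)

end ELTAux
namespace ELTAux

open Finset Equiv

variable {F L : Type*} [AddCommGroup F] [LinearOrder F] [IsOrderedAddMonoid F] [CommRing L] {n : ℕ}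

/-- sign as an ELT element -/
def sgnL (σ : Equiv.Perm (Fin n)) : Option (F × L) :=
  some ((0 : F), ((Equiv.Perm.sign σ : ℤ) : L))

noncomputable def Det (A : Matrix (Fin n) (Fin n) (Option (F × L))) : Option (F × L) :=
  ∑ σ : Equiv.Perm (Fin n), sgnL σ * ∏ r, A r (σ r)

theorem eltDet_eq_Det (A : Matrix (Fin n) (Fin n) (Option (F × L))) : eltDet A = Det A := by
  rw [eltDet, eSumF_eq_sum]
  apply Finset.sum_congr rfl
  intro σ _
  rw [eProd_eq_prod]
  rfl

def updCol (A : Matrix (Fin n) (Fin n) (Option (F × L))) (i : Fin n)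
    (x : Fin n → Option (F × L)) : Matrix (Fin n) (Fin n) (Option (F × L)) :=
  fun r c => if c = i then x r else A r c

theorem updCol_self (A : Matrix (Fin n) (Fin n) (Option (F × L))) (i : Fin n) :
    updCol A i (fun r => A r i) = A := by
  funext r c
  by_cases h : c = i <;> simp [updCol, h]

theorem det_updCol (A : Matrix (Fin n) (Fin n) (Option (F × L))) (i : Fin n)
    (x : Fin n → Option (F × L)) :
    Det (updCol A i x) =
      ∑ σ : Equiv.Perm (Fin n),
        sgnL σ * (x (σ⁻¹ i) * ∏ r ∈ Finset.univ.erase (σ⁻¹ i), A r (σ r)) := by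
  apply Finset.sum_congr rfl
  intro σ _
  congr 1
  rw [← Finset.mul_prod_erase Finset.univ _ (Finset.mem_univ (σ⁻¹ i))]
  congr 1
  · simp [updCol]
  · apply Finset.prod_congr rfl
    intro r hr
    have hri : r ≠ σ⁻¹ i := (Finset.mem_erase.1 hr).1
    have : σ r ≠ i := fun hc => hri (by simp [← hc])
    simp [updCol, this]

theorem det_updCol_sum (A : Matrix (Fin n) (Fin n) (Option (F × L))) (i : Fin n)
    (v : Fin n → Option (F × L)) :
    Det (updCol A i (fun r => ∑ k, A r k * v k)) =
      ∑ k, v k * Det (updCol A i (fun r => A r k)) := by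
  rw [det_updCol]
  have hL : ∀ σ : Equiv.Perm (Fin n),
      sgnL σ * ((∑ k, A (σ⁻¹ i) k * v k) * ∏ r ∈ Finset.univ.erase (σ⁻¹ i), A r (σ r)) =
        ∑ k, v k * (sgnL σ * (A (σ⁻¹ i) k * ∏ r ∈ Finset.univ.erase (σ⁻¹ i), A r (σ r))) := by
    intro σ
    rw [Finset.sum_mul, Finset.mul_sum]
    apply Finset.sum_congr rfl
    intro k _
    ring
  simp only [hL]
  rw [Finset.sum_comm]
  apply Finset.sum_congr rfl
  intro k _
  rw [← Finset.mul_sum, det_updCol]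

theorem sBar_pair (c : L) (z : Option (F × L)) :
    sBar ((some ((0 : F), c) : Option (F × L)) * z + (some ((0 : F), -c) : Option (F × L)) * z)
      = 0 := by
  cases z with
  | none => rfl
  | some b =>
    rw [some_mul_some, some_mul_some]
    show sBar (some (eltAdd _ _)) = 0
    rw [eltAdd_tie (show (eltMul ((0:F),c) b).1 = (eltMul ((0:F),-c) b).1 from rfl), sBar_some]
    show c * b.2 + -c * b.2 = 0
    ring

theorem sBar_det_repeat (A : Matrix (Fin n) (Fin n) (Option (F × L))) (i k : Fin n)
    (hik : i ≠ k) :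
    sBar (Det (updCol A i (fun r => A r k))) = 0 := by
  classical
  set B := updCol A i (fun r => A r k) with hB
  have hBswap : ∀ r c, B r (Equiv.swap i k c) = B r c := by
    intro r c
    rcases eq_or_ne c i with rfl | hci
    · rw [Equiv.swap_apply_left]
      simp [hB, updCol, hik.symm]
    rcases eq_or_ne c k with rfl | hck
    · rw [Equiv.swap_apply_right]
      simp [hB, updCol, hik.symm]
    · rw [Equiv.swap_apply_of_ne_of_ne hci hck]
  have hP : ∀ σ : Equiv.Perm (Fin n),
      (∏ r, B r ((Equiv.swap i k * σ) r)) = ∏ r, B r (σ r) := by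
    intro σ
    apply Finset.prod_congr rfl
    intro r _
    rw [Equiv.Perm.mul_apply, hBswap]
  set t : Equiv.Perm (Fin n) → Option (F × L) := fun σ => sgnL σ * ∏ r, B r (σ r) with ht
  have hsplit : Det B = (∑ σ ∈ Finset.univ.filter (fun σ => Equiv.Perm.sign σ = 1), t σ) +
      ∑ σ ∈ Finset.univ.filter (fun σ => ¬ Equiv.Perm.sign σ = 1), t σ := by
    rw [Det, Finset.sum_filter_add_sum_filter_not]
  have hbij : (∑ σ ∈ Finset.univ.filter (fun σ => ¬ Equiv.Perm.sign σ = 1), t σ) =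
      ∑ σ ∈ Finset.univ.filter (fun σ => Equiv.Perm.sign σ = 1), t (Equiv.swap i k * σ) := by
    apply Finset.sum_nbij' (i := fun σ => Equiv.swap i k * σ) (j := fun σ => Equiv.swap i k * σ)
    · intro σ hσ
      simp only [Finset.mem_filter, Finset.mem_univ, true_and] at hσ ⊢
      rcases Int.units_eq_one_or (Equiv.Perm.sign σ) with h | h
      · exact absurd h hσ
      · rw [Equiv.Perm.sign_mul, Equiv.Perm.sign_swap hik, h]
        exact Int.units_mul_self (-1)
    · intro σ hσ
      simp only [Finset.mem_filter, Finset.mem_univ, true_and] at hσ ⊢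
      rw [Equiv.Perm.sign_mul, Equiv.Perm.sign_swap hik, hσ]
      norm_num
    · intro σ _
      rw [← mul_assoc, Equiv.swap_mul_self, one_mul]
    · intro σ _
      rw [← mul_assoc, Equiv.swap_mul_self, one_mul]
    · intro σ _
      rw [← mul_assoc, Equiv.swap_mul_self, one_mul]
  rw [hsplit, hbij, ← Finset.sum_add_distrib]
  apply sBar_finsum
  intro σ hσ
  simp only [Finset.mem_filter, Finset.mem_univ, true_and] at hσ
  have hs1 : sgnL (F := F) (L := L) σ = some ((0 : F), (1 : L)) := by
    rw [sgnL, hσ]; norm_num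
  have hs2 : sgnL (F := F) (L := L) (Equiv.swap i k * σ) = some ((0 : F), (-1 : L)) := by
    rw [sgnL, Equiv.Perm.sign_mul, Equiv.Perm.sign_swap hik, hσ]
    norm_num
  rw [ht]
  simp only []
  rw [hP σ, hs1, hs2]
  exact sBar_pair 1 _

theorem tfst_Det (A : Matrix (Fin n) (Fin n) (Option (F × L))) :
    tfst (Det A) = Finset.univ.sup (fun σ : Equiv.Perm (Fin n) => ∑ r, tfst (A r (σ r))) := by
  rw [Det, tfst_finsum]
  apply Finset.sup_congr rfl
  intro σ _
  rw [tfst_mul, tfst_finprod, show tfst (sgnL (F := F) (L := L) σ) = ((0 : F) : WithBot F)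
    from rfl, WithBot.coe_zero, zero_add]

theorem perm_weight_le {A : Matrix (Fin n) (Fin n) (Option (F × L))} {d : F × L}
    (hd : Det A = some d) (τ : Equiv.Perm (Fin n)) :
    (∑ r, tfst (A r (τ r))) ≤ (d.1 : WithBot F) := by
  have := Finset.le_sup (f := fun σ : Equiv.Perm (Fin n) => ∑ r, tfst (A r (σ r)))
    (Finset.mem_univ τ)
  rw [← tfst_Det, hd] at this
  exact this

theorem exists_argmax_perm {A : Matrix (Fin n) (Fin n) (Option (F × L))} {d : F × L}
    (hd : Det A = some d) :
    ∃ σ : Equiv.Perm (Fin n), (∑ r, tfst (A r (σ r))) = (d.1 : WithBot F) := by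
  obtain ⟨σ, _, hσ⟩ := Finset.exists_mem_eq_sup (Finset.univ : Finset (Equiv.Perm (Fin n)))
    Finset.univ_nonempty (fun σ : Equiv.Perm (Fin n) => ∑ r, tfst (A r (σ r)))
  refine ⟨σ, ?_⟩
  rw [← hσ, ← tfst_Det, hd]
  rfl

end ELTAux
namespace ELTAux

open Finset

variable {F : Type*} [AddCommGroup F] [LinearOrder F] [IsOrderedAddMonoid F] {n : ℕ}

section Potentials

variable (g : Fin n → Fin n → WithBot F) (δ : Fin n → F)

def pedge (u v : Fin n) : Prop := g u v ≠ ⊥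

/-- weight of edge u → v, normalized by subtracting δ u. Junk if no edge. -/
noncomputable def pwt (u v : Fin n) : F := WithBot.unbotD 0 (g u v) - δ u

theorem pedge_coe {u v : Fin n} (h : pedge g u v) : g u v = ((pwt g δ u v + δ u : F) : WithBot F) := by
  rw [pwt, sub_add_cancel]
  cases hguv : g u v with
  | bot => exact absurd hguv h
  | coe a => rw [WithBot.unbotD_coe]

/-- weight of a walk -/
noncomputable def wtL : Fin n → List (Fin n) → F
  | _, [] => 0
  | u, v :: l => pwt g δ u v + wtL v l

theorem wtL_nil (u : Fin n) : wtL g δ u [] = 0 := rfl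
theorem wtL_cons (u v : Fin n) (l : List (Fin n)) :
    wtL g δ u (v :: l) = pwt g δ u v + wtL g δ v l := rfl

theorem wtL_split (u v : Fin n) (l₁ l₂ : List (Fin n)) :
    wtL g δ u (l₁ ++ v :: l₂) = wtL g δ u (l₁ ++ [v]) + wtL g δ v l₂ := by
  induction l₁ generalizing u with
  | nil => simp [wtL_cons, wtL_nil]
  | cons x l₁ ih =>
    show wtL g δ u (x :: (l₁ ++ v :: l₂)) = wtL g δ u (x :: (l₁ ++ [v])) + _
    rw [wtL_cons, wtL_cons, ih, add_assoc]

theorem wtL_getD (l : List (Fin n)) (u w : Fin n) :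
    wtL g δ u l = ∑ t ∈ Finset.range l.length,
      pwt g δ ((u :: l).getD t w) (l.getD t w) := by
  induction l generalizing u with
  | nil => simp [wtL_nil]
  | cons v l ih =>
    rw [wtL_cons, ih v]
    rw [show (v :: l).length = l.length + 1 from rfl, Finset.sum_range_succ']
    simp only [List.getD_cons_succ, List.getD_cons_zero]
    rw [add_comm]

theorem chain_getD {l : List (Fin n)} {u : Fin n} (w : Fin n)
    (h : List.Chain (pedge g) u l) :
    ∀ t < l.length, pedge g ((u :: l).getD t w) (l.getD t w) := by
  induction l generalizing u with
  | nil => intro t ht; simp only [List.length_nil] at ht; exact absurd ht (Nat.not_lt_zero t)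
  | cons v l ih =>
    rw [List.Chain, List.isChain_cons_cons] at h
    intro t ht
    cases t with
    | zero => simpa using h.1
    | succ s =>
      simp only [List.getD_cons_succ]
      exact ih h.2 s (by simpa using ht)

end Potentials

end ELTAux
namespace ELTAux

open Finset

variable {F : Type*} [AddCommGroup F] [LinearOrder F] [IsOrderedAddMonoid F] {n : ℕ}
variable (g : Fin n → Fin n → WithBot F) (δ : Fin n → F)

theorem cycle_nonpos
    (Hdiag : ∀ u, g u u = ((δ u : F) : WithBot F))
    (Hopt : ∀ ζ : Equiv.Perm (Fin n), (∑ u, g u (ζ u)) ≤ ∑ u, ((δ u : F) : WithBot F))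
    (a : Fin n) (l : List (Fin n)) (hnd : (a :: l).Nodup)
    (hch : List.Chain (pedge g) a (l ++ [a])) : wtL g δ a (l ++ [a]) ≤ 0 := by
  classical
  set L' : List (Fin n) := a :: l with hL'
  set m := L'.length with hm
  have hm0 : 0 < m := by simp [hL', hm]
  set ζ := L'.formPerm with hζ
  have hmval : m = l.length + 1 := by simp [hm, hL']
  have hlen : (l ++ [a]).length = m := by simp [hL', hm]
  have hLa : a :: (l ++ [a]) = L' ++ [a] := rfl
  have hLgetD : ∀ t, t < m → (L' ++ [a]).getD t a = L'.getD t a := by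
    intro t ht
    rw [List.getD_eq_getElem _ _ (by simp [hL']; omega),
      List.getD_eq_getElem _ _ (by omega), List.getElem_append_left (by omega)]
  have hstep : ∀ t, t < m → (l ++ [a]).getD t a = L'.getD ((t + 1) % m) a := by
    intro t ht
    have ht' : t < (l ++ [a]).length := by rwa [hlen]
    rw [List.getD_eq_getElem _ _ ht']
    have h2 : (l ++ [a])[t] = (L' ++ [a])[t + 1]'(by simp [hL'] at ht ⊢; omega) := rfl
    rw [h2]
    rcases Nat.lt_or_ge (t + 1) m with h1 | h1
    · rw [Nat.mod_eq_of_lt h1, List.getD_eq_getElem _ _ (by omega),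
        List.getElem_append_left (by omega)]
    · have hteq : t + 1 = m := by omega
      have hr : L'.getD ((t + 1) % m) a = a := by
        rw [hteq, Nat.mod_self, List.getD_eq_getElem _ _ hm0]
        simp [hL']
      rw [hr, List.getElem_append_right (by omega)]
      simp
  have hfp : ∀ t, t < m → ζ (L'.getD t a) = L'.getD ((t + 1) % m) a := by
    intro t ht
    rw [List.getD_eq_getElem _ _ (by omega), List.getD_eq_getElem _ _ (by exact Nat.mod_lt _ hm0),
      hζ, List.formPerm_apply_getElem L' hnd t (by omega)]
  -- weight as a sum over steps
  have hwt : wtL g δ a (l ++ [a]) =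
      ∑ t ∈ Finset.range m, pwt g δ (L'.getD t a) (ζ (L'.getD t a)) := by
    rw [wtL_getD g δ (l ++ [a]) a a, hlen]
    apply Finset.sum_congr rfl
    intro t ht
    rw [Finset.mem_range] at ht
    rw [show (a :: (l ++ [a])) = L' ++ [a] from rfl, hLgetD t ht, hstep t ht, hfp t ht]
  -- edges along the cycle
  have hedge : ∀ t, t < m → pedge g (L'.getD t a) (ζ (L'.getD t a)) := by
    intro t ht
    have := chain_getD g a hch t (by rwa [hlen])
    rw [show (a :: (l ++ [a])) = L' ++ [a] from rfl, hLgetD t ht, hstep t ht, ← hfp t ht] at this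
    exact this
  have hedge' : ∀ u ∈ L'.toFinset, pedge g u (ζ u) := by
    intro u hu
    rw [List.mem_toFinset] at hu
    obtain ⟨t, htv⟩ := List.mem_iff_get.1 hu
    have : u = L'.getD t a := by rw [List.getD_eq_getElem _ _ t.isLt]; exact htv.symm
    rw [this]
    exact hedge t t.isLt
  -- sum over range = sum over toFinset
  have himg : L'.toFinset = Finset.image (fun t : Fin m => L'.get t) Finset.univ := by
    ext u
    simp only [List.mem_toFinset, Finset.mem_image, Finset.mem_univ, true_and]
    rw [List.mem_iff_get]
  have hinj : ∀ t1 ∈ (Finset.univ : Finset (Fin m)), ∀ t2 ∈ Finset.univ,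
      L'.get t1 = L'.get t2 → t1 = t2 := by
    intro t1 _ t2 _ h
    exact (hnd.get_inj_iff).1 h
  have hsum_tf : ∀ h : Fin n → F,
      (∑ u ∈ L'.toFinset, h u) = ∑ t ∈ Finset.range m, h (L'.getD t a) := by
    intro h
    rw [himg, Finset.sum_image hinj, ← Fin.sum_univ_eq_sum_range (fun t => _) m]
    apply Finset.sum_congr rfl
    intro t _
    rw [List.getD_eq_getElem _ _ t.isLt]
    rfl
  -- compare with Hopt
  have hopt := Hopt ζ
  rw [← Finset.sum_add_sum_compl L'.toFinset (fun u => g u (ζ u)),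
    ← Finset.sum_add_sum_compl L'.toFinset (fun u => ((δ u : F) : WithBot F))] at hopt
  have hcompl : ∀ u ∈ L'.toFinsetᶜ, g u (ζ u) = ((δ u : F) : WithBot F) := by
    intro u hu
    rw [Finset.mem_compl, List.mem_toFinset] at hu
    rw [hζ, List.formPerm_apply_of_notMem hu, Hdiag]
  rw [Finset.sum_congr rfl hcompl, ← wb_coe_sum] at hopt
  have h2 : (∑ u ∈ L'.toFinset, g u (ζ u)) ≤ ∑ u ∈ L'.toFinset, ((δ u : F) : WithBot F) :=
    wb_add_le_add_right _ hopt
  have hterm : ∀ u ∈ L'.toFinset, g u (ζ u) = ((pwt g δ u (ζ u) + δ u : F) : WithBot F) := by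
    intro u hu
    exact pedge_coe g δ (hedge' u hu)
  rw [Finset.sum_congr rfl hterm, ← wb_coe_sum, ← wb_coe_sum, WithBot.coe_le_coe] at h2
  rw [Finset.sum_add_distrib] at h2
  have h2' : (∑ u ∈ L'.toFinset, pwt g δ u (ζ u)) + (∑ u ∈ L'.toFinset, δ u) ≤
      (∑ u ∈ L'.toFinset, δ u) := h2
  have h3 : (∑ u ∈ L'.toFinset, pwt g δ u (ζ u)) ≤ 0 := add_le_iff_nonpos_left.1 h2'
  rw [hsum_tf (fun u => pwt g δ u (ζ u))] at h3
  rw [hwt]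
  exact h3

end ELTAux
namespace ELTAux

open Finset

variable {F : Type*} [AddCommGroup F] [LinearOrder F] [IsOrderedAddMonoid F] {n : ℕ}
variable (g : Fin n → Fin n → WithBot F) (δ : Fin n → F)

theorem chain_split' {α : Type*} {R : α → α → Prop} {a b : α} {l₁ l₂ : List α} :
    List.Chain R a (l₁ ++ b :: l₂) ↔ List.Chain R a (l₁ ++ [b]) ∧ List.Chain R b l₂ := by
  induction l₁ generalizing a with
  | nil => simp [List.Chain]
  | cons x l ih =>
    simp only [List.cons_append, List.Chain, List.isChain_cons_cons] at ih ⊢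
    rw [ih]
    tauto

theorem not_nodup_decomp {α : Type*} : ∀ (l : List α), ¬ l.Nodup →
    ∃ (b : α) (l1 l2 l3 : List α), l = l1 ++ b :: l2 ++ b :: l3 := by
  intro l
  induction l with
  | nil => intro h; exact absurd List.nodup_nil h
  | cons x xs ih =>
    intro h
    by_cases hx : x ∈ xs
    · obtain ⟨s, t, rfl⟩ := List.append_of_mem hx
      exact ⟨x, [], s, t, by simp⟩
    · have hxs : ¬ xs.Nodup := fun hn => h (List.nodup_cons.2 ⟨hx, hn⟩)
      obtain ⟨b, l1, l2, l3, rfl⟩ := ih hxs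
      exact ⟨b, x :: l1, l2, l3, by simp⟩

theorem closed_walk_nonpos
    (Hdiag : ∀ u, g u u = ((δ u : F) : WithBot F))
    (Hopt : ∀ ζ : Equiv.Perm (Fin n), (∑ u, g u (ζ u)) ≤ ∑ u, ((δ u : F) : WithBot F)) :
    ∀ (m : ℕ) (l : List (Fin n)) (a : Fin n), l.length < m →
      List.Chain (pedge g) a (l ++ [a]) → wtL g δ a (l ++ [a]) ≤ 0 := by
  intro m
  induction m with
  | zero => intro l a h; exact absurd h (Nat.not_lt_zero _)
  | succ m ih =>
    intro l a hlen hch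
    by_cases hnd : (a :: l).Nodup
    · exact cycle_nonpos g δ Hdiag Hopt a l hnd hch
    · obtain ⟨b, l1, l2, l3, hdec⟩ := not_nodup_decomp _ hnd
      cases l1 with
      | nil =>
        simp only [List.nil_append] at hdec
        injection hdec with h1 h2
        subst h1
        subst h2
        simp only [List.append_eq] at hlen hch ⊢
        have hsplit : l2 ++ a :: l3 ++ [a] = l2 ++ a :: (l3 ++ [a]) := by simp
        rw [hsplit] at hch ⊢
        obtain ⟨hc1, hc2⟩ := ELTAux.chain_split'.1 hch
        rw [wtL_split g δ a a l2 (l3 ++ [a])]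
        have h1 := ih l2 a (by simp at hlen; omega) hc1
        have h2 := ih l3 a (by simp at hlen; omega) hc2
        exact add_nonpos h1 h2
      | cons x l1' =>
        injection hdec with h1 h2
        subst h1
        subst h2
        simp only [List.append_eq] at hlen hch ⊢
        have hsplit : (l1' ++ b :: l2 ++ b :: l3) ++ [a] = l1' ++ b :: (l2 ++ b :: (l3 ++ [a])) := by
          simp
        rw [hsplit] at hch ⊢
        obtain ⟨hc1, hc23⟩ := ELTAux.chain_split'.1 hch
        obtain ⟨hc2, hc3⟩ := ELTAux.chain_split'.1 hc23
        rw [wtL_split g δ a b l1' (l2 ++ b :: (l3 ++ [a])), wtL_split g δ b b l2 (l3 ++ [a])]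
        have hmid := ih l2 b (by simp at hlen; omega) hc2
        have hspl : wtL g δ a (l1' ++ b :: (l3 ++ [a])) ≤ 0 := by
          have hchs : List.Chain (pedge g) a (l1' ++ b :: (l3 ++ [a])) :=
            ELTAux.chain_split'.2 ⟨hc1, hc3⟩
          have : l1' ++ b :: (l3 ++ [a]) = (l1' ++ b :: l3) ++ [a] := by simp
          rw [this] at hchs ⊢
          exact ih (l1' ++ b :: l3) a (by simp at hlen ⊢; omega) hchs
        rw [wtL_split g δ a b l1' (l3 ++ [a])] at hspl
        have heq : wtL g δ a (l1' ++ [b]) + (wtL g δ b (l2 ++ [b]) + wtL g δ b (l3 ++ [a])) =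
            (wtL g δ a (l1' ++ [b]) + wtL g δ b (l3 ++ [a])) + wtL g δ b (l2 ++ [b]) := by abel
        rw [heq]
        exact add_nonpos hspl hmid

open Classical in
noncomputable def best : ℕ → Fin n → F
  | 0, _ => 0
  | (m+1), u => (insert (best m u)
      ((Finset.univ.filter (fun v => g u v ≠ ⊥)).image (fun v => pwt g δ u v + best m v))).max'
      (Finset.insert_nonempty _ _)

theorem best_le_succ (m : ℕ) (u : Fin n) : best g δ m u ≤ best g δ (m+1) u := by
  classical
  rw [show best g δ (m+1) u = _ from rfl]
  exact Finset.le_max' _ _ (Finset.mem_insert_self _ _)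

theorem best_nonneg (m : ℕ) (u : Fin n) : 0 ≤ best g δ m u := by
  induction m with
  | zero => exact le_refl _
  | succ m ih => exact le_trans ih (best_le_succ g δ m u)

theorem edge_le_best {u v : Fin n} (h : pedge g u v) (m : ℕ) :
    pwt g δ u v + best g δ m v ≤ best g δ (m+1) u := by
  classical
  apply Finset.le_max'
  apply Finset.mem_insert_of_mem
  exact Finset.mem_image.2 ⟨v, Finset.mem_filter.2 ⟨Finset.mem_univ _, h⟩, rfl⟩

theorem best_is_walk (m : ℕ) (u : Fin n) :
    ∃ l : List (Fin n), List.Chain (pedge g) u l ∧ l.length ≤ m ∧ wtL g δ u l = best g δ m u := by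
  classical
  induction m generalizing u with
  | zero => exact ⟨[], List.Chain.nil, by simp, rfl⟩
  | succ m ih =>
    have hmem := Finset.max'_mem (insert (best g δ m u)
      ((Finset.univ.filter (fun v => g u v ≠ ⊥)).image (fun v => pwt g δ u v + best g δ m v)))
      (Finset.insert_nonempty _ _)
    rw [show (insert (best g δ m u)
      ((Finset.univ.filter (fun v => g u v ≠ ⊥)).image (fun v => pwt g δ u v + best g δ m v))).max'
      (Finset.insert_nonempty _ _) = best g δ (m+1) u from rfl] at hmem
    rcases Finset.mem_insert.1 hmem with heq | hmem2
    · obtain ⟨l, hc, hl, hw⟩ := ih u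
      exact ⟨l, hc, le_trans hl (Nat.le_succ m), by rw [hw, heq]⟩
    · obtain ⟨v, hv, heq⟩ := Finset.mem_image.1 hmem2
      have hedge : pedge g u v := (Finset.mem_filter.1 hv).2
      obtain ⟨l, hc, hl, hw⟩ := ih v
      refine ⟨v :: l, List.Chain.cons hedge hc, by simp; omega, ?_⟩
      rw [wtL_cons, hw, heq]

theorem walk_le_best : ∀ (m : ℕ) (l : List (Fin n)) (u : Fin n),
    List.Chain (pedge g) u l → l.length ≤ m → wtL g δ u l ≤ best g δ m u := by
  intro m
  induction m with
  | zero =>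
    intro l u _ hl
    rw [List.eq_nil_of_length_eq_zero (Nat.le_zero.1 hl)]
    exact le_refl _
  | succ m ih =>
    intro l u hc hl
    cases l with
    | nil => exact best_nonneg g δ _ _
    | cons v l' =>
      rw [List.Chain, List.isChain_cons_cons] at hc
      rw [wtL_cons]
      calc pwt g δ u v + wtL g δ v l' ≤ pwt g δ u v + best g δ m v :=
            add_le_add_right (ih l' v hc.2 (by simp at hl; omega)) _
        _ ≤ best g δ (m+1) u := edge_le_best g δ hc.1 m

theorem walk_le_bestn
    (Hdiag : ∀ u, g u u = ((δ u : F) : WithBot F))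
    (Hopt : ∀ ζ : Equiv.Perm (Fin n), (∑ u, g u (ζ u)) ≤ ∑ u, ((δ u : F) : WithBot F)) :
    ∀ (k : ℕ) (l : List (Fin n)) (u : Fin n), l.length ≤ k →
      List.Chain (pedge g) u l → wtL g δ u l ≤ best g δ n u := by
  intro k
  induction k with
  | zero =>
    intro l u hl hc
    exact walk_le_best g δ n l u hc (by omega)
  | succ k ih =>
    intro l u hl hc
    by_cases hle : l.length ≤ n
    · exact walk_le_best g δ n l u hc hle
    · have hnd : ¬ (u :: l).Nodup := by
        intro hnd
        have := hnd.length_le_card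
        simp [Fintype.card_fin] at this
        omega
      obtain ⟨b, l1, l2, l3, hdec⟩ := not_nodup_decomp _ hnd
      cases l1 with
      | nil =>
        simp only [List.nil_append] at hdec
        injection hdec with h1 h2
        subst h1
        subst h2
        simp only [List.append_eq] at hl hc hle ⊢
        rw [wtL_split g δ u u l2 l3]
        have hlen2 : (l2 ++ u :: l3).length = l2.length + l3.length + 1 := by simp; omega
        obtain ⟨hc1, hc2⟩ := ELTAux.chain_split'.1 hc
        have hclosed : wtL g δ u (l2 ++ [u]) ≤ 0 :=
          closed_walk_nonpos g δ Hdiag Hopt (l2.length + 1) l2 u (by omega) hc1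
        have hrest : wtL g δ u l3 ≤ best g δ n u := ih l3 u (by
          rw [hlen2] at hl; omega) hc2
        calc wtL g δ u (l2 ++ [u]) + wtL g δ u l3 ≤ 0 + best g δ n u :=
              add_le_add hclosed hrest
          _ = best g δ n u := zero_add _
      | cons x l1' =>
        injection hdec with h1 h2
        subst h1
        subst h2
        simp only [List.append_eq] at hl hc hle ⊢
        have hsplit : l1' ++ b :: l2 ++ b :: l3 = l1' ++ b :: (l2 ++ b :: l3) := by simp
        rw [hsplit] at hc ⊢
        obtain ⟨hc1, hc23⟩ := ELTAux.chain_split'.1 hc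
        obtain ⟨hc2, hc3⟩ := ELTAux.chain_split'.1 hc23
        rw [wtL_split g δ u b l1' (l2 ++ b :: l3), wtL_split g δ b b l2 l3]
        have hmid : wtL g δ b (l2 ++ [b]) ≤ 0 :=
          closed_walk_nonpos g δ Hdiag Hopt (l2.length + 1) l2 b (by omega) hc2
        have hspl : wtL g δ u (l1' ++ [b]) + wtL g δ b l3 ≤ best g δ n u := by
          rw [← wtL_split g δ u b l1' l3]
          apply ih (l1' ++ b :: l3) u (by simp at hl ⊢; omega)
          exact ELTAux.chain_split'.2 ⟨hc1, hc3⟩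
        have heq : wtL g δ u (l1' ++ [b]) + (wtL g δ b (l2 ++ [b]) + wtL g δ b l3) =
            (wtL g δ u (l1' ++ [b]) + wtL g δ b l3) + wtL g δ b (l2 ++ [b]) := by abel
        rw [heq]
        calc (wtL g δ u (l1' ++ [b]) + wtL g δ b l3) + wtL g δ b (l2 ++ [b]) ≤
              best g δ n u + 0 := add_le_add hspl hmid
          _ = best g δ n u := add_zero _

theorem exists_potential
    (Hdiag : ∀ u, g u u = ((δ u : F) : WithBot F))
    (Hopt : ∀ ζ : Equiv.Perm (Fin n), (∑ u, g u (ζ u)) ≤ ∑ u, ((δ u : F) : WithBot F)) :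
    ∃ p : Fin n → F, ∀ u v, g u v ≤ ((δ u + p u - p v : F) : WithBot F) := by
  refine ⟨best g δ n, fun u v => ?_⟩
  by_cases h : g u v = ⊥
  · rw [h]; exact bot_le
  · rw [pedge_coe g δ h, WithBot.coe_le_coe]
    have hcl : pwt g δ u v + best g δ n v ≤ best g δ n u := by
      obtain ⟨l, hc, hl, hw⟩ := best_is_walk g δ n v
      have := walk_le_bestn g δ Hdiag Hopt (l.length + 1) (v :: l) u (by simp) 
        (List.Chain.cons h hc)
      rw [wtL_cons, hw] at this
      exact this
    calc pwt g δ u v + δ u ≤ (best g δ n u - best g δ n v) + δ u :=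
          add_le_add_left (le_sub_iff_add_le.2 hcl) _
      _ = δ u + best g δ n u - best g δ n v := by abel

end ELTAux
namespace ELTAux

open Finset

variable {F L : Type*} [AddCommGroup F] [LinearOrder F] [IsOrderedAddMonoid F] [CommRing L] {n : ℕ}

theorem some_one_mul_some_one (x y : F) :
    (some (x, (1 : L)) : Option (F × L)) * some (y, (1 : L)) = some (x + y, (1 : L)) := by
  rw [some_mul_some]
  show some (eltMul (x, (1:L)) (y, (1:L))) = _
  rw [eltMul]
  norm_num

theorem prod_some_one {α : Type*} (s : Finset α) (f : α → F) :
    (∏ x ∈ s, (some (f x, (1 : L)) : Option (F × L))) = some ((∑ x ∈ s, f x), (1 : L)) := by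
  classical
  induction s using Finset.induction_on with
  | empty => simp [one_def]
  | insert _ _ hni ih =>
    rw [Finset.prod_insert hni, Finset.sum_insert hni, ih, some_one_mul_some_one]

theorem sBar_layerone_mul (t : F) (X : Option (F × L)) :
    sBar ((some (t, (1 : L)) : Option (F × L)) * X) = sBar X := by
  cases X with
  | none => rfl
  | some b => rw [some_mul_some]; show (1 : L) * b.2 = b.2; rw [one_mul]

/-- Main lemma in normalized form. -/
theorem main_normalized (A : Matrix (Fin n) (Fin n) (Option (F × L))) (d2 e2 : L)
    (hd : Det A = some ((0 : F), d2)) (hinv : d2 * e2 = 1)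
    (hA : ∀ i j, tfst (A i j) ≤ ((0 : F) : WithBot F))
    (v : Fin n → Option (F × L))
    (hv : ∀ i, v i = none ∨ ∃ w : F × L, v i = some w ∧ w.2 ≠ 0)
    (hAv : ∀ i, sBar (∑ j, A i j * v j) = 0) :
    ∀ i, v i = none := by
  classical
  by_contra hex
  push_neg at hex
  obtain ⟨i0, hi0⟩ := hex
  set S : Finset (Fin n) := Finset.univ.filter (fun k => v k ≠ none) with hS
  have hSne : S.Nonempty := ⟨i0, Finset.mem_filter.2 ⟨Finset.mem_univ _, hi0⟩⟩
  obtain ⟨i, hiS, himax⟩ := S.exists_max_image (fun k => tfst (v k)) hSne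
  have hvi : v i ≠ none := (Finset.mem_filter.1 hiS).2
  obtain ⟨w, hw, hw2⟩ := (hv i).resolve_left hvi
  set b : Fin n → Option (F × L) := fun r => ∑ k, A r k * v k with hb
  set D : Fin n → Option (F × L) := fun k => Det (updCol A i (fun r => A r k)) with hD
  have hN1 : sBar (Det (updCol A i b)) = 0 := by
    rw [det_updCol]
    apply sBar_finsum
    intro σ _
    exact sBar_mul_right _ _ (sBar_mul_left _ _ (hAv (σ⁻¹ i)))
  have hN2 : Det (updCol A i b) = ∑ k, v k * D k := det_updCol_sum A i v
  have hDi : D i = Det A := by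
    show Det (updCol A i fun r => A r i) = Det A
    rw [updCol_self]
  have hsplit : Det (updCol A i b) = v i * Det A + ∑ k ∈ Finset.univ.erase i, v k * D k := by
    rw [hN2, ← Finset.add_sum_erase _ _ (Finset.mem_univ i), hDi]
  set X := v i * Det A with hX
  set Y := ∑ k ∈ Finset.univ.erase i, v k * D k with hY
  have hYs : sBar Y = 0 := by
    apply sBar_finsum
    intro k hk
    have hki : k ≠ i := (Finset.mem_erase.1 hk).1
    exact sBar_mul_right _ _ (sBar_det_repeat A i k (Ne.symm hki))
  set x : F × L := (w.1 + 0, w.2 * d2) with hxdef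
  have hXval : X = some x := by
    rw [hX, hw, hd, some_mul_some]
    rfl
  have hX2 : w.2 * d2 ≠ 0 := by
    intro h0
    apply hw2
    have h1 : w.2 * (d2 * e2) = 0 := by rw [← mul_assoc, h0, zero_mul]
    rwa [hinv, mul_one] at h1
  have hXYs : sBar (X + Y) = 0 := by
    rw [hXval, ← hXval, hX, hY, ← hsplit]
    exact hN1
  cases hYc : Y with
  | none =>
    rw [hYc, show (none : Option (F × L)) = 0 from rfl, add_zero, hXval, sBar_some] at hXYs
    exact hX2 hXYs
  | some y =>
    have hy2 : y.2 = 0 := by rw [hYc, sBar_some] at hYs; exact hYs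
    have hXY : X + Y = some (eltAdd x y) := by rw [hXval, hYc]; rfl
    have hlt : x.1 < y.1 := by
      rcases lt_trichotomy x.1 y.1 with h | h | h
      · exact h
      · exfalso
        rw [hXY, eltAdd_tie h, sBar_some] at hXYs
        apply hX2
        have : x.2 = 0 := by rwa [hy2, add_zero] at hXYs
        exact this
      · exfalso
        rw [hXY, eltAdd_gt h, sBar_some] at hXYs
        exact hX2 hXYs
    have htY : tfst Y = (y.1 : WithBot F) := by rw [hYc]; rfl
    have hne : (Finset.univ.erase i).Nonempty := by
      by_contra hne
      rw [Finset.not_nonempty_iff_eq_empty] at hne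
      have hY0 : Y = 0 := by rw [hY, hne, Finset.sum_empty]
      rw [hY0] at hYc
      exact Option.some_ne_none _ hYc.symm
    rw [hY, tfst_finsum] at htY
    obtain ⟨k, hk, hksup⟩ := Finset.exists_mem_eq_sup _ hne (fun k => tfst (v k * D k))
    rw [hksup] at htY
    rw [tfst_mul] at htY
    have hvkb : tfst (v k) ≠ ⊥ := by
      intro hbot
      rw [hbot, WithBot.bot_add] at htY
      exact WithBot.bot_ne_coe htY
    have hDkb : tfst (D k) ≠ ⊥ := by
      intro hbot
      rw [hbot, WithBot.add_bot] at htY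
      exact WithBot.bot_ne_coe htY
    obtain ⟨wk, hvkc⟩ : ∃ wk, v k = some wk := by
      cases hc : v k with
      | none => exact absurd (by rw [hc]; rfl) hvkb
      | some wk => exact ⟨wk, rfl⟩
    obtain ⟨dk, hDkc⟩ : ∃ dk, D k = some dk := by
      cases hc : D k with
      | none => exact absurd (by rw [hc]; rfl) hDkb
      | some dk => exact ⟨dk, rfl⟩
    have hDk0 : tfst (D k) ≤ ((0 : F) : WithBot F) := by
      rw [hD]
      simp only []
      rw [tfst_Det]
      apply Finset.sup_le
      intro σ _
      have hterm : ∀ r, tfst (updCol A i (fun r => A r k) r (σ r)) ≤ ((0 : F) : WithBot F) := by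
        intro r
        by_cases h : σ r = i
        · rw [show updCol A i (fun r => A r k) r (σ r) = A r k by simp [updCol, h]]
          exact hA r k
        · rw [show updCol A i (fun r => A r k) r (σ r) = A r (σ r) by simp [updCol, h]]
          exact hA r (σ r)
      calc (∑ r, tfst (updCol A i (fun r => A r k) r (σ r)))
          ≤ ∑ _r : Fin n, ((0 : F) : WithBot F) := Finset.sum_le_sum (fun r _ => hterm r)
        _ = ((0 : F) : WithBot F) := by rw [← wb_coe_sum]; simp
    rw [hvkc, hDkc, tfst_some, tfst_some, ← WithBot.coe_add] at htY
    have htYf : wk.1 + dk.1 = y.1 := WithBot.coe_inj.1 htY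
    have hdk0 : dk.1 ≤ 0 := by
      rw [hDkc, tfst_some, WithBot.coe_le_coe] at hDk0
      exact hDk0
    have hkS : k ∈ S := Finset.mem_filter.2 ⟨Finset.mem_univ _,
      by rw [hvkc]; exact Option.some_ne_none wk⟩
    have hmax := himax k hkS
    rw [hvkc, hw, tfst_some, tfst_some, WithBot.coe_le_coe] at hmax
    have hcontra : w.1 < w.1 :=
      calc w.1 = w.1 + 0 := (add_zero _).symm
        _ < y.1 := hlt
        _ = wk.1 + dk.1 := htYf.symm
        _ ≤ wk.1 + 0 := add_le_add_right hdk0 _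
        _ = wk.1 := add_zero _
        _ ≤ w.1 := hmax
    exact lt_irrefl _ hcontra

end ELTAux
namespace ELTAux

open Finset

variable {F L : Type*} [AddCommGroup F] [LinearOrder F] [IsOrderedAddMonoid F] [CommRing L] {n : ℕ}

theorem det_rescale (A : Matrix (Fin n) (Fin n) (Option (F × L))) (r c : Fin n → F) :
    Det (fun i j => (some (r i, (1:L)) : Option (F × L)) * (A i j * some (c j, (1:L)))) =
      some ((∑ i, r i) + (∑ j, c j), (1:L)) * Det A := by
  rw [Det, Finset.mul_sum]
  apply Finset.sum_congr rfl
  intro σ _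
  have h1 : (∏ x, ((some (r x, (1:L)) : Option (F × L)) * (A x (σ x) * some (c (σ x), (1:L))))) =
      (∏ x, (some (r x, (1:L)) : Option (F × L))) *
        ((∏ x, A x (σ x)) * ∏ x, (some (c (σ x), (1:L)) : Option (F × L))) := by
    rw [← Finset.prod_mul_distrib, ← Finset.prod_mul_distrib]
  rw [h1, prod_some_one, prod_some_one]
  have h2 : (∑ x, c (σ x)) = ∑ x, c x := Equiv.sum_comp σ c
  rw [h2, ← some_one_mul_some_one]
  ring

end ELTAux

/-- If det(A) is invertible in R, then the columns of A are linearly independent: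
the only vector with entries in R^× ∪ {−∞} mapped by A to a layer-zero vector is
the all-(−∞) vector. -/
theorem columns_independent_of_det_invertible {F L : Type*}
    [AddCommGroup F] [LinearOrder F] [IsOrderedAddMonoid F] [CommRing L] {n : ℕ}
    (A : Matrix (Fin n) (Fin n) (Option (F × L)))
    (d e : F × L) (hd : eltDet A = some d)
    (he : eltMul d e = ((0 : F), (1 : L)))
    (v : Fin n → Option (F × L))
    (hv : ∀ i, v i = none ∨ ∃ w : F × L, v i = some w ∧ w.2 ≠ 0)
    (hAv : ∀ i, sBar (eSumF fun j => eMul (A i j) (v j)) = 0) :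
    ∀ i, v i = none := by
  classical
  open ELTAux in
  have hd' : ELTAux.Det A = some d := by rw [← ELTAux.eltDet_eq_Det]; exact hd
  have hinv : d.2 * e.2 = 1 := congrArg Prod.snd he
  have hAv' : ∀ i, sBar (∑ j, A i j * v j) = 0 := by
    intro i
    have h := hAv i
    rwa [ELTAux.eSumF_eq_sum] at h
  obtain ⟨σs, hσs⟩ := ELTAux.exists_argmax_perm hd'
  set g : Fin n → Fin n → WithBot F := fun u w => ELTAux.tfst (A (σs⁻¹ u) w) with hg
  have hnb : ∀ u, g u u ≠ ⊥ := by
    intro u hbot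
    have hne : (∑ r, ELTAux.tfst (A r (σs r))) ≠ ⊥ := by
      rw [hσs]; exact WithBot.coe_ne_bot
    have h2 := ELTAux.wb_sum_ne_bot hne (Finset.mem_univ (σs⁻¹ u))
    rw [Equiv.Perm.inv_def, Equiv.apply_symm_apply] at h2
    exact h2 hbot
  set δ : Fin n → F := fun u => (g u u).unbot (hnb u) with hδ
  have Hdiag : ∀ u, g u u = ((δ u : F) : WithBot F) := fun u => (WithBot.coe_unbot _ (hnb u)).symm
  have hδsum : (∑ u, ((δ u : F) : WithBot F)) = (d.1 : WithBot F) := by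
    calc (∑ u, ((δ u : F) : WithBot F)) = ∑ u, g u u := by
          apply Finset.sum_congr rfl; intro u _; rw [Hdiag]
      _ = ∑ i, ELTAux.tfst (A (σs⁻¹ (σs i)) (σs i)) :=
          (Equiv.sum_comp σs (fun u => ELTAux.tfst (A (σs⁻¹ u) u))).symm
      _ = ∑ i, ELTAux.tfst (A i (σs i)) := by
          apply Finset.sum_congr rfl; intro i _; rw [Equiv.Perm.inv_def, Equiv.symm_apply_apply]
      _ = _ := hσs
  have Hopt : ∀ ζ : Equiv.Perm (Fin n), (∑ u, g u (ζ u)) ≤ ∑ u, ((δ u : F) : WithBot F) := by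
    intro ζ
    rw [hδsum]
    calc (∑ u, g u (ζ u)) = ∑ i, ELTAux.tfst (A (σs⁻¹ (σs i)) (ζ (σs i))) :=
          (Equiv.sum_comp σs (fun u => ELTAux.tfst (A (σs⁻¹ u) (ζ u)))).symm
      _ = ∑ i, ELTAux.tfst (A i ((σs.trans ζ) i)) := by
          apply Finset.sum_congr rfl; intro i _; rw [Equiv.Perm.inv_def, Equiv.symm_apply_apply]; rfl
      _ ≤ _ := ELTAux.perm_weight_le hd' (σs.trans ζ)
  obtain ⟨p, hp⟩ := ELTAux.exists_potential g δ Hdiag Hopt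
  set r : Fin n → F := fun i => -(δ (σs i) + p (σs i)) with hr
  set c : Fin n → F := fun w => p w with hc
  set A' : Matrix (Fin n) (Fin n) (Option (F × L)) :=
    fun i j => (some (r i, (1:L)) : Option (F × L)) * (A i j * some (c j, (1:L))) with hA'
  set v' : Fin n → Option (F × L) :=
    fun j => (some (-(c j), (1:L)) : Option (F × L)) * v j with hv'
  have h3 : (∑ u, δ u) = d.1 := by
    apply WithBot.coe_inj.1
    rw [ELTAux.wb_coe_sum]
    exact hδsum
  have hT : (∑ i, r i) + (∑ j, c j) = -d.1 := by
    have h1 : (∑ i, r i) = -∑ i, (δ (σs i) + p (σs i)) := by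
      rw [hr, ← Finset.sum_neg_distrib]
    have h2 : (∑ i, (δ (σs i) + p (σs i))) = (∑ u, δ u) + ∑ u, p u := by
      rw [Finset.sum_add_distrib, Equiv.sum_comp σs δ, Equiv.sum_comp σs p]
    rw [h1, h2, h3, hc]
    abel
  have hdA' : ELTAux.Det A' = some ((0 : F), d.2) := by
    rw [hA', ELTAux.det_rescale A r c, hd', hT, ELTAux.some_mul_some]
    show some (eltMul (-d.1, (1:L)) d) = _
    rw [eltMul]
    norm_num
  have hA'bound : ∀ i j, ELTAux.tfst (A' i j) ≤ ((0 : F) : WithBot F) := by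
    intro i j
    rw [hA']
    simp only []
    rw [ELTAux.tfst_mul, ELTAux.tfst_mul, ELTAux.tfst_some, ELTAux.tfst_some]
    have hAij : ELTAux.tfst (A i j) ≤ ((δ (σs i) + p (σs i) - p j : F) : WithBot F) := by
      have h4 := hp (σs i) j
      rw [hg] at h4
      simp only [] at h4
      rwa [Equiv.Perm.inv_def, Equiv.symm_apply_apply] at h4
    calc ((r i : F) : WithBot F) + (ELTAux.tfst (A i j) + ((c j : F) : WithBot F))
        ≤ ((r i : F) : WithBot F) +
            (((δ (σs i) + p (σs i) - p j : F) : WithBot F) + ((c j : F) : WithBot F)) :=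
          add_le_add_right (add_le_add_left hAij _) _
      _ = ((r i + (δ (σs i) + p (σs i) - p j + c j) : F) : WithBot F) := by
          rw [← WithBot.coe_add, ← WithBot.coe_add]
      _ = ((0 : F) : WithBot F) := by
          rw [WithBot.coe_inj]
          simp only [hr, hc]
          abel
  have hv'prop : ∀ i, v' i = none ∨ ∃ w : F × L, v' i = some w ∧ w.2 ≠ 0 := by
    intro i
    rcases hv i with h | ⟨w, hw, hw2⟩
    · left
      simp only [hv']
      rw [h]
      rfl
    · right
      refine ⟨(-(c i) + w.1, 1 * w.2), ?_, ?_⟩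
      · simp only [hv']
        rw [hw, ELTAux.some_mul_some]
        rfl
      · rw [one_mul]; exact hw2
  have hAv'' : ∀ i, sBar (∑ j, A' i j * v' j) = 0 := by
    intro i
    have hterm : ∀ j, A' i j * v' j =
        (some (c j, (1:L)) : Option (F × L)) * some (-(c j), (1:L)) *
          (some (r i, (1:L)) * (A i j * v j)) := by
      intro j
      simp only [hA', hv']
      ring
    rw [Finset.sum_congr rfl (fun j _ => hterm j)]
    have hcc : ∀ j, (some (c j, (1:L)) : Option (F × L)) * some (-(c j), (1:L)) *
        (some (r i, (1:L)) * (A i j * v j)) =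
        (some (r i, (1:L)) : Option (F × L)) * (A i j * v j) := by
      intro j
      rw [ELTAux.some_one_mul_some_one, add_neg_cancel]
      rw [show (some ((0:F), (1:L)) : Option (F × L)) = 1 from rfl, one_mul]
    rw [Finset.sum_congr rfl (fun j _ => hcc j), ← Finset.mul_sum, ELTAux.sBar_layerone_mul]
    exact hAv' i
  have hall := ELTAux.main_normalized A' d.2 e.2 hdA' hinv hA'bound v' hv'prop hAv''
  intro j
  rcases hv j with h | ⟨w, hw, hw2⟩
  · exact h
  · exfalso
    have h5 := hall j
    simp only [hv'] at h5
    rw [hw, ELTAux.some_mul_some] at h5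
    exact Option.some_ne_none _ h5
end
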